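/- arXiv:1801.08691 — 6 statements merged into one kernel-verified Lean document; each statement's English description precedes it below -/
import Mathlib

section
/- Let h ∈ Γ₀(ℝ^N) be separable, h(x) = Σ_{i=1}^N h_i(x_i) with each h_i ∈ Γ₀(ℝ), let D be a diagonal N×N matrix with strictly positive diagonal entries d₁,…,d_N, let u ∈ ℝ^N, and assume V = D + u u^T (respectively V = D − u u^T) is symmetric positive definite. Then for every x ∈ ℝ^N, the i-th component of prox^V_h(x) equals prox_{h_i/d_i}( x_i − α* u_i/d_i ) (respectively x_i + α* u_i/d_i), where α* is the unique real root of L(α) = Σ_{i=1}^N u_i ( x_i − prox_{h_i/d_i}( x_i ∓ α u_i/d_i ) ) + α (sign − for V = D + u u^T, sign + for V = D − u u^T), and L is Lipschitz continuous and strongly increasing on ℝ. -/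
open Matrix

noncomputable section

/-- Euclidean norm `‖x‖ = √⟨x,x⟩` on `ℝ^N` (inner product `⟨x,y⟩ = ∑ i, x i * y i`). -/
def euNorm {N : ℕ} (x : Fin N → ℝ) : ℝ := Real.sqrt (x ⬝ᵥ x)

/-- `p` is the proximal point of `h` at `x` in the metric induced by `V`, i.e. `p`
minimizes `z ↦ h z + (1/2)‖x - z‖²_V` (with `‖w‖²_V = ⟨w, V w⟩`). -/
def IsProxPt {N : ℕ} (V : Matrix (Fin N) (Fin N) ℝ) (h : (Fin N → ℝ) → EReal)
    (x p : Fin N → ℝ) : Prop :=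
  ∀ z : Fin N → ℝ,
    h p + ((1 / 2 * ((x - p) ⬝ᵥ (V *ᵥ (x - p))) : ℝ) : EReal) ≤
      h z + ((1 / 2 * ((x - z) ⬝ᵥ (V *ᵥ (x - z))) : ℝ) : EReal)

/-- `h` belongs to `Γ₀(ℝ^N)`: proper, never `-∞`, lower semicontinuous and convex. -/
def Gamma0 {N : ℕ} (h : (Fin N → ℝ) → EReal) : Prop :=
  (∃ z, h z ≠ ⊤) ∧ (∀ z, h z ≠ ⊥) ∧ LowerSemicontinuous h ∧
    ∀ x y : Fin N → ℝ, ∀ t : ℝ, 0 ≤ t → t ≤ 1 →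
      h (t • x + (1 - t) • y) ≤ (t : EReal) * h x + ((1 - t : ℝ) : EReal) * h y

/-- `p` is the proximal point of `g : ℝ → EReal` at `t`, i.e. the minimizer of
`s ↦ g s + (1/2)(t - s)²`. -/
def IsProxPt1 (g : ℝ → EReal) (t p : ℝ) : Prop :=
  ∀ s : ℝ, g p + ((1 / 2 * (t - p) ^ 2 : ℝ) : EReal) ≤
    g s + ((1 / 2 * (t - s) ^ 2 : ℝ) : EReal)

/-- `g` belongs to `Γ₀(ℝ)`. -/
def Gamma0R (g : ℝ → EReal) : Prop :=
  (∃ s, g s ≠ ⊤) ∧ (∀ s, g s ≠ ⊥) ∧ LowerSemicontinuous g ∧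
    ∀ a b t : ℝ, 0 ≤ t → t ≤ 1 →
      g (t * a + (1 - t) * b) ≤ (t : EReal) * g a + ((1 - t : ℝ) : EReal) * g b

lemma mul_ne_bot' {a : ℝ} (ha : 0 < a) {y : EReal} (hy : y ≠ ⊥) : (a : EReal) * y ≠ ⊥ := by
  induction y with
  | bot => exact absurd rfl hy
  | coe r => rw [← EReal.coe_mul]; exact EReal.coe_ne_bot _
  | top => rw [EReal.coe_mul_top_of_pos ha]; simp

lemma mul_ne_top' {a : ℝ} (ha : 0 < a) {y : EReal} (hy : y ≠ ⊤) : (a : EReal) * y ≠ ⊤ := by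
  induction y with
  | bot => rw [EReal.coe_mul_bot_of_pos ha]; simp
  | coe r => rw [← EReal.coe_mul]; exact EReal.coe_ne_top _
  | top => exact absurd rfl hy

lemma mul_eq_top_of' {a : ℝ} (ha : 0 < a) {y : EReal} (hy : y = ⊤) : (a : EReal) * y = ⊤ := by
  rw [hy]; exact EReal.coe_mul_top_of_pos ha

/-- subgradient inequality for the scaled prox -/
lemma key_subgrad {g : ℝ → EReal} (hg : Gamma0R g) {c : ℝ} (hc : 0 < c)
    {t p : ℝ} (hp : IsProxPt1 (fun s => ((c⁻¹ : ℝ) : EReal) * g s) t p) (s : ℝ) :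
    g p ≠ ⊤ ∧ g p + ((c * (t - p) * (s - p) : ℝ) : EReal) ≤ g s := by
  obtain ⟨⟨s0, hs0⟩, hbot, _, hconv⟩ := hg
  have hcinv : (0:ℝ) < c⁻¹ := by positivity
  -- finiteness of g p
  have hgp : g p ≠ ⊤ := by
    intro htop
    have h1 := hp s0
    simp only at h1
    rw [mul_eq_top_of' hcinv htop, EReal.top_add_coe] at h1
    have hs0' : g s0 = ((g s0).toReal : ℝ) := (EReal.coe_toReal hs0 (hbot s0)).symm
    rw [hs0', ← EReal.coe_mul, ← EReal.coe_add] at h1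
    exact EReal.coe_ne_top _ (top_le_iff.mp h1)
  refine ⟨hgp, ?_⟩
  set P := (g p).toReal with hPdef
  have hP : g p = (P : ℝ) := (EReal.coe_toReal hgp (hbot p)).symm
  by_cases hgs : g s = ⊤
  · rw [hgs]; exact le_top
  set S := (g s).toReal with hSdef
  have hS : g s = (S : ℝ) := (EReal.coe_toReal hgs (hbot s)).symm
  rw [hP, hS, ← EReal.coe_add, EReal.coe_le_coe_iff]
  -- real inequality: P + c*(t-p)*(s-p) ≤ S
  have hstep : ∀ l : ℝ, 0 < l → l ≤ 1 → P + c * (t - p) * (s - p) ≤ S + l * (c / 2 * (s - p) ^ 2) := by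
    intro l hl0 hl1
    have h1 := hp (l * s + (1 - l) * p)
    simp only at h1
    have h3 := hconv s p l hl0.le hl1
    rw [hS, hP] at h3
    have h3' : g (l * s + (1 - l) * p) ≤ (((l * S + (1 - l) * P) : ℝ) : EReal) := by
      rw [EReal.coe_add, EReal.coe_mul, EReal.coe_mul]; exact h3
    have h2 : ((c⁻¹ : ℝ) : EReal) * g (l * s + (1 - l) * p) ≤
        (((c⁻¹ * (l * S + (1 - l) * P)) : ℝ) : EReal) := by
      rw [EReal.coe_mul]
      exact mul_le_mul_of_nonneg_left h3' (by exact_mod_cast hcinv.le)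
    have h4 : (((c⁻¹ * P + 1 / 2 * (t - p) ^ 2) : ℝ) : EReal) ≤
        (((c⁻¹ * (l * S + (1 - l) * P) + 1 / 2 * (t - (l * s + (1 - l) * p)) ^ 2) : ℝ) : EReal) := by
      rw [EReal.coe_add, EReal.coe_add, EReal.coe_mul, ← hP]
      calc ((c⁻¹:ℝ) : EReal) * g p + ((1 / 2 * (t - p) ^ 2 : ℝ) : EReal)
          ≤ ((c⁻¹:ℝ) : EReal) * g (l * s + (1 - l) * p) +
            ((1 / 2 * (t - (l * s + (1 - l) * p)) ^ 2 : ℝ) : EReal) := h1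
        _ ≤ _ := by
            rw [EReal.coe_mul]
            exact add_le_add_left h2 _
    rw [EReal.coe_le_coe_iff] at h4
    have hc' : c ≠ 0 := ne_of_gt hc
    have h5 : c⁻¹ * (l * P) + l * ((t - p) * (s - p)) ≤
        c⁻¹ * (l * S) + l ^ 2 / 2 * (s - p) ^ 2 := by nlinarith [h4]
    have h6 := mul_le_mul_of_nonneg_left h5 hc.le
    have e1 : c * (c⁻¹ * (l * P) + l * ((t - p) * (s - p))) =
        l * P + c * (l * ((t - p) * (s - p))) := by field_simp
    have e2 : c * (c⁻¹ * (l * S) + l ^ 2 / 2 * (s - p) ^ 2) =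
        l * S + c * (l ^ 2 / 2 * (s - p) ^ 2) := by field_simp
    rw [e1, e2] at h6
    nlinarith [h6, hl0]
  by_cases hsp : s = p
  · have := hstep 1 one_pos le_rfl
    rw [hsp] at this ⊢
    simpa using this
  have hM : (0:ℝ) < c / 2 * (s - p) ^ 2 := by
    have : s - p ≠ 0 := sub_ne_zero_of_ne hsp
    positivity
  by_contra hcon
  push_neg at hcon
  set δ := P + c * (t - p) * (s - p) - S with hδ
  have hδ0 : 0 < δ := by simp only [hδ]; linarith
  set l := min 1 (δ / (2 * (c / 2 * (s - p) ^ 2))) with hldef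
  have hl0 : 0 < l := lt_min one_pos (by positivity)
  have hl1 : l ≤ 1 := min_le_left _ _
  have := hstep l hl0 hl1
  have hlle : l ≤ δ / (2 * (c / 2 * (s - p) ^ 2)) := min_le_right _ _
  have hMne : c / 2 * (s - p) ^ 2 ≠ 0 := ne_of_gt hM
  have hhalf : l * (c / 2 * (s - p) ^ 2) ≤ δ / 2 := by
    calc l * (c / 2 * (s - p) ^ 2) ≤ δ / (2 * (c / 2 * (s - p) ^ 2)) * (c / 2 * (s - p) ^ 2) :=
          mul_le_mul_of_nonneg_right hlle hM.le
      _ = δ / 2 := by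
          have h1 : s - p ≠ 0 := sub_ne_zero_of_ne hsp
          have h2 : c ≠ 0 := ne_of_gt hc
          field_simp
  linarith [hstep l hl0 hl1]

lemma key_firm {g : ℝ → EReal} (hg : Gamma0R g) {c : ℝ} (hc : 0 < c)
    {t1 t2 p1 p2 : ℝ}
    (h1 : IsProxPt1 (fun s => ((c⁻¹ : ℝ) : EReal) * g s) t1 p1)
    (h2 : IsProxPt1 (fun s => ((c⁻¹ : ℝ) : EReal) * g s) t2 p2) :
    (p1 - p2) ^ 2 ≤ (p1 - p2) * (t1 - t2) := by
  obtain ⟨hf1, hs1⟩ := key_subgrad hg hc h1 p2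
  obtain ⟨hf2, hs2⟩ := key_subgrad hg hc h2 p1
  have hbot := hg.2.1
  have hP1 : g p1 = ((g p1).toReal : ℝ) := (EReal.coe_toReal hf1 (hbot p1)).symm
  have hP2 : g p2 = ((g p2).toReal : ℝ) := (EReal.coe_toReal hf2 (hbot p2)).symm
  rw [hP1, hP2, ← EReal.coe_add, EReal.coe_le_coe_iff] at hs1
  rw [hP1, hP2, ← EReal.coe_add, EReal.coe_le_coe_iff] at hs2
  nlinarith [hs1, hs2, hc]

lemma sq_le_mul_abs {D E : ℝ} (h : D ^ 2 ≤ D * E) : |D| ≤ |E| := by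
  by_contra hcon
  push_neg at hcon
  have h1 : D * E ≤ |D| * |E| := le_trans (le_abs_self _) (le_of_eq (abs_mul D E))
  nlinarith [sq_abs D, abs_nonneg E, abs_nonneg D]

lemma aux_e1 {di e ab ui D : ℝ} (hdi : di ≠ 0) :
    di * (D * (e * ab * ui / di)) = e * (ui * D * ab) := by
  field_simp

lemma aux_e2 {di ui : ℝ} (hdi : di ≠ 0) : di * (ui / di) * (ui / di) = ui ^ 2 / di := by
  field_simp

lemma aux_e3 (di ui : ℝ) : ui * (ui / di) = ui ^ 2 / di := by ring

lemma aux_per {di ui e al xi pi zi : ℝ} (hdi : di ≠ 0) :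
    di * ((xi - e * al * ui / di) - pi) * (zi - pi) =
      1/2 * (di * (xi - pi) * (xi - pi)) + 1/2 * (di * (zi - pi) * (zi - pi))
        - 1/2 * (di * (xi - zi) * (xi - zi)) - e * al * (ui * (zi - pi)) := by
  field_simp
  ring

/-- Separable case: for `h(x) = ∑ᵢ hᵢ(xᵢ)` and `V = D ± u uᵀ` SPD
(`ε = 1` for `+`, `ε = -1` for `-`), the `i`-th component of `prox^V_h(x)` is
`prox_{hᵢ/dᵢ}(xᵢ ∓ α* uᵢ/dᵢ)`, where `α*` is the unique root of
`L(α) = ∑ᵢ uᵢ(xᵢ - prox_{hᵢ/dᵢ}(xᵢ ∓ α uᵢ/dᵢ)) + α`, and `L` is Lipschitz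
continuous and strongly increasing. -/
theorem stmt_6 {N : ℕ} (hi : Fin N → ℝ → EReal) (hhi : ∀ i, Gamma0R (hi i))
    (h : (Fin N → ℝ) → EReal) (hsep : ∀ z : Fin N → ℝ, h z = ∑ i, hi i (z i))
    (d : Fin N → ℝ) (hd : ∀ i, 0 < d i)
    (u : Fin N → ℝ)
    (ε : ℝ) (hε : ε = 1 ∨ ε = -1)
    (V : Matrix (Fin N) (Fin N) ℝ)
    (hV : V = Matrix.diagonal d + ε • vecMulVec u u) (hVpd : V.PosDef)
    (proxi : Fin N → ℝ → ℝ)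
    (hproxi : ∀ i : Fin N, ∀ t : ℝ,
      IsProxPt1 (fun s => (((d i)⁻¹ : ℝ) : EReal) * hi i s) t (proxi i t))
    (x : Fin N → ℝ)
    (L : ℝ → ℝ)
    (hL : ∀ α : ℝ,
      L α = (∑ i, u i * (x i - proxi i (x i - ε * α * u i / d i))) + α) :
    (∃! αs : ℝ, L αs = 0) ∧
    (∀ αs : ℝ, L αs = 0 →
      IsProxPt V h x (fun i => proxi i (x i - ε * αs * u i / d i))) ∧
    (∃ K : ℝ, ∀ a b : ℝ, |L a - L b| ≤ K * |a - b|) ∧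
    (∃ c : ℝ, 0 < c ∧ ∀ a b : ℝ, (L a - L b) * (a - b) ≥ c * (a - b) ^ 2) := by
  have hd0 : ∀ i, d i ≠ 0 := fun i => ne_of_gt (hd i)
  have hεabs : |ε| = 1 := by rcases hε with h1 | h1 <;> rw [h1] <;> norm_num
  -- dot product formula
  have hdot : ∀ a b : Fin N → ℝ,
      a ⬝ᵥ (V *ᵥ b) = (∑ i, d i * a i * b i) +
        ε * ((∑ i, u i * a i) * (∑ i, u i * b i)) := by
    intro a b
    rw [hV, add_mulVec, dotProduct_add, smul_mulVec, dotProduct_smul, smul_eq_mul]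
    congr 1
    · simp only [dotProduct, mulVec_diagonal]
      exact Finset.sum_congr rfl fun i _ => by ring
    · congr 1
      simp only [dotProduct, mulVec, vecMulVec_apply, dotProduct]
      rw [Finset.sum_mul_sum]
      refine Finset.sum_congr rfl fun i _ => ?_
      rw [Finset.mul_sum]
      exact Finset.sum_congr rfl fun j _ => by ring
  -- quadratic form nonnegative
  have hquad : ∀ w : Fin N → ℝ,
      0 ≤ (∑ i, d i * w i * w i) + ε * ((∑ i, u i * w i) * (∑ i, u i * w i)) := by
    intro w
    have h0 := hVpd.posSemidef.dotProduct_mulVec_nonneg w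
    rwa [star_trivial, hdot] at h0
  -- firm nonexpansiveness of each 1D prox
  have firm : ∀ i (a b : ℝ), (proxi i a - proxi i b) ^ 2 ≤ (proxi i a - proxi i b) * (a - b) :=
    fun i a b => key_firm (hhi i) (hd i) (hproxi i a) (hproxi i b)
  have prox_lip : ∀ i (a b : ℝ), |proxi i a - proxi i b| ≤ |a - b| :=
    fun i a b => sq_le_mul_abs (firm i a b)
  set S : ℝ := ∑ i, u i ^ 2 / d i with hSdef
  have hS0 : 0 ≤ S := Finset.sum_nonneg fun i _ => div_nonneg (sq_nonneg _) (hd i).le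
  -- per term bounds
  have hterm1 : ∀ (a b : ℝ) (i : Fin N),
      0 ≤ ε * (u i * (proxi i (x i - ε * b * u i / d i) - proxi i (x i - ε * a * u i / d i)) *
        (a - b)) := by
    intro a b i
    have hf := firm i (x i - ε * b * u i / d i) (x i - ε * a * u i / d i)
    have harg : (x i - ε * b * u i / d i) - (x i - ε * a * u i / d i) = ε * (a - b) * u i / d i := by
      ring
    rw [harg] at hf
    have h6 := mul_le_mul_of_nonneg_left hf (hd i).le
    rw [aux_e1 (hd0 i)] at h6
    have h7 : 0 ≤ d i * (proxi i (x i - ε * b * u i / d i) -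
        proxi i (x i - ε * a * u i / d i)) ^ 2 :=
      mul_nonneg (hd i).le (sq_nonneg _)
    linarith
  have hterm2 : ∀ (a b : ℝ) (i : Fin N),
      |u i * (proxi i (x i - ε * b * u i / d i) - proxi i (x i - ε * a * u i / d i))| ≤
        u i ^ 2 / d i * |a - b| := by
    intro a b i
    have hplip := prox_lip i (x i - ε * b * u i / d i) (x i - ε * a * u i / d i)
    have harg : (x i - ε * b * u i / d i) - (x i - ε * a * u i / d i) = ε * (a - b) * u i / d i := by
      ring
    rw [harg] at hplip
    have habs : |ε * (a - b) * u i / d i| = |u i| / d i * |a - b| := by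
      rw [abs_div, abs_mul, abs_mul, hεabs, abs_of_pos (hd i)]
      ring
    rw [habs] at hplip
    rw [abs_mul]
    calc |u i| * |proxi i (x i - ε * b * u i / d i) - proxi i (x i - ε * a * u i / d i)|
        ≤ |u i| * (|u i| / d i * |a - b|) :=
          mul_le_mul_of_nonneg_left hplip (abs_nonneg _)
      _ = |u i| * |u i| / d i * |a - b| := by ring
      _ = u i ^ 2 / d i * |a - b| := by rw [abs_mul_abs_self, sq]
  -- expansion of L differences
  have hLdiff : ∀ a b : ℝ, L a - L b =
      (∑ i, u i * (proxi i (x i - ε * b * u i / d i) - proxi i (x i - ε * a * u i / d i))) +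
        (a - b) := by
    intro a b
    rw [hL a, hL b]
    have e : (∑ i, u i * (x i - proxi i (x i - ε * a * u i / d i))) -
        (∑ i, u i * (x i - proxi i (x i - ε * b * u i / d i))) =
        ∑ i, u i * (proxi i (x i - ε * b * u i / d i) - proxi i (x i - ε * a * u i / d i)) := by
      rw [← Finset.sum_sub_distrib]
      exact Finset.sum_congr rfl fun i _ => by ring
    linear_combination e
  -- Lipschitz
  have hlip : ∀ a b : ℝ, |L a - L b| ≤ (1 + S) * |a - b| := by
    intro a b
    rw [hLdiff a b]
    calc |(∑ i, u i * (proxi i (x i - ε * b * u i / d i) -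
            proxi i (x i - ε * a * u i / d i))) + (a - b)|
        ≤ |∑ i, u i * (proxi i (x i - ε * b * u i / d i) -
            proxi i (x i - ε * a * u i / d i))| + |a - b| := abs_add_le _ _
      _ ≤ (∑ i, |u i * (proxi i (x i - ε * b * u i / d i) -
            proxi i (x i - ε * a * u i / d i))|) + |a - b| := by
            gcongr
            exact Finset.abs_sum_le_sum_abs _ _
      _ ≤ (∑ i, u i ^ 2 / d i * |a - b|) + |a - b| := by
            gcongr with i
            exact hterm2 a b i
      _ = (1 + S) * |a - b| := by rw [← Finset.sum_mul]; ring
  -- strong monotonicity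
  have hmonoex : ∃ c : ℝ, 0 < c ∧ ∀ a b : ℝ, c * (a - b) ^ 2 ≤ (L a - L b) * (a - b) := by
    have hexp : ∀ a b : ℝ, (L a - L b) * (a - b) =
        (∑ i, u i * (proxi i (x i - ε * b * u i / d i) -
          proxi i (x i - ε * a * u i / d i)) * (a - b)) + (a - b) ^ 2 := by
      intro a b
      rw [hLdiff a b, add_mul, Finset.sum_mul, sq]
    rcases hε with h1 | h1
    · refine ⟨1, one_pos, fun a b => ?_⟩
      rw [hexp a b, one_mul]
      have hsum : 0 ≤ ∑ i, u i * (proxi i (x i - ε * b * u i / d i) -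
          proxi i (x i - ε * a * u i / d i)) * (a - b) :=
        Finset.sum_nonneg fun i _ => by
          have h9 := hterm1 a b i
          rw [h1, one_mul] at h9
          rw [h1]
          exact h9
      linarith
    · -- ε = -1 : need S < 1
      have hSlt : S < 1 := by
        by_cases hu : u = 0
        · have : S = 0 := by
            rw [hSdef]
            refine Finset.sum_eq_zero fun i _ => ?_
            rw [hu]
            simp
          rw [this]; norm_num
        · have hw : (fun i => u i / d i) ≠ 0 := by
            intro hc
            apply hu
            funext i
            have := congrFun hc i
            simp only [Pi.zero_apply] at this
            exact (div_eq_zero_iff.mp this).resolve_right (hd0 i)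
          have hpos := hVpd.dotProduct_mulVec_pos (x := fun i => u i / d i) hw
          rw [star_trivial, hdot] at hpos
          have e1 : (∑ i, d i * (u i / d i) * (u i / d i)) = S := by
            rw [hSdef]
            exact Finset.sum_congr rfl fun i _ => aux_e2 (hd0 i)
          have e2 : (∑ i, u i * (u i / d i)) = S := by
            rw [hSdef]
            exact Finset.sum_congr rfl fun i _ => aux_e3 (d i) (u i)
          rw [e1, e2, h1] at hpos
          nlinarith [hpos, hS0]
      refine ⟨1 - S, by linarith, fun a b => ?_⟩
      rw [hexp a b]
      have hsum : -(S * (a - b) ^ 2) ≤ ∑ i, u i * (proxi i (x i - ε * b * u i / d i) -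
          proxi i (x i - ε * a * u i / d i)) * (a - b) := by
        have : ∀ i ∈ Finset.univ, -(u i ^ 2 / d i * (a - b) ^ 2) ≤
            u i * (proxi i (x i - ε * b * u i / d i) -
              proxi i (x i - ε * a * u i / d i)) * (a - b) := by
          intro i _
          have h2 := hterm2 a b i
          have h3 : |u i * (proxi i (x i - ε * b * u i / d i) -
              proxi i (x i - ε * a * u i / d i)) * (a - b)| ≤ u i ^ 2 / d i * (a - b) ^ 2 := by
            rw [abs_mul]
            calc |u i * (proxi i (x i - ε * b * u i / d i) -
                  proxi i (x i - ε * a * u i / d i))| * |a - b|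
                ≤ u i ^ 2 / d i * |a - b| * |a - b| :=
                  mul_le_mul_of_nonneg_right h2 (abs_nonneg _)
              _ = u i ^ 2 / d i * (a - b) ^ 2 := by
                  rw [mul_assoc, abs_mul_abs_self]
                  ring
          linarith [neg_abs_le (u i * (proxi i (x i - ε * b * u i / d i) -
            proxi i (x i - ε * a * u i / d i)) * (a - b)), h3]
        calc -(S * (a - b) ^ 2) = ∑ i, -(u i ^ 2 / d i * (a - b) ^ 2) := by
              rw [hSdef, Finset.sum_mul, Finset.sum_neg_distrib]
          _ ≤ _ := Finset.sum_le_sum this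
      nlinarith [hsum]
  obtain ⟨c0, hc0, hmono⟩ := hmonoex
  -- continuity of L
  have hcont : Continuous L := by
    have hK0 : (0:ℝ) ≤ 1 + S := by linarith
    have : LipschitzWith ⟨1 + S, hK0⟩ L := by
      apply LipschitzWith.of_dist_le_mul
      intro a b
      rw [Real.dist_eq, Real.dist_eq]
      exact_mod_cast hlip a b
    exact this.continuous
  -- existence and uniqueness of root
  have hroot : ∃! αs : ℝ, L αs = 0 := by
    set b := (|L 0| + 1) / c0 with hb
    have hbpos : 0 < b := by positivity
    have hcb : c0 * b = |L 0| + 1 := by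
      rw [hb, mul_comm, div_mul_cancel₀ _ (ne_of_gt hc0)]
    have hLb : 0 < L b := by
      have := hmono b 0
      simp only [sub_zero] at this
      -- c0 * b^2 ≤ (L b - L 0) * b
      nlinarith [this, hbpos, abs_nonneg (L 0), le_abs_self (L 0), neg_abs_le (L 0), hcb]
    have hLa : L (-b) < 0 := by
      have := hmono (-b) 0
      simp only [sub_zero] at this
      nlinarith [this, hbpos, le_abs_self (L 0), neg_abs_le (L 0), hcb]
    have hab : (-b) ≤ b := by linarith
    have hIVT := intermediate_value_Icc hab hcont.continuousOn
    have h0mem : (0:ℝ) ∈ Set.Icc (L (-b)) (L b) := ⟨hLa.le, hLb.le⟩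
    obtain ⟨αs, _, hαs⟩ := hIVT h0mem
    refine ⟨αs, hαs, fun y hy => ?_⟩
    have := hmono y αs
    rw [hy, hαs] at this
    have h0 : (y - αs) ^ 2 ≤ 0 := by nlinarith [this]
    have := pow_eq_zero_iff (n := 2) (by norm_num) |>.mp (le_antisymm h0 (sq_nonneg _))
    linarith [sub_eq_zero.mp this]
  -- part 2
  have part2 : ∀ αs : ℝ, L αs = 0 →
      IsProxPt V h x (fun i => proxi i (x i - ε * αs * u i / d i)) := by
    intro αs hαs z
    set t : Fin N → ℝ := fun i => x i - ε * αs * u i / d i with htdef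
    set p : Fin N → ℝ := fun i => proxi i (x i - ε * αs * u i / d i) with hpdef
    have hsub : ∀ i : Fin N,
        hi i (p i) + ((d i * (t i - p i) * (z i - p i) : ℝ) : EReal) ≤ hi i (z i) :=
      fun i => (key_subgrad (hhi i) (hd i) (hproxi i (t i)) (z i)).2
    set W : ℝ := ∑ i, d i * (t i - p i) * (z i - p i) with hWdef
    have hsum : (∑ i, hi i (p i)) + ((W : ℝ) : EReal) ≤ ∑ i, hi i (z i) := by
      calc (∑ i, hi i (p i)) + ((W : ℝ) : EReal)
          = ∑ i, (hi i (p i) + ((d i * (t i - p i) * (z i - p i) : ℝ) : EReal)) := by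
            rw [Finset.sum_add_distrib]
            congr 1
            rw [hWdef]
            exact map_sum (⟨⟨Real.toEReal, EReal.coe_zero⟩, EReal.coe_add⟩ : ℝ →+ EReal) _ _
        _ ≤ ∑ i, hi i (z i) := Finset.sum_le_sum fun i _ => hsub i
    -- real quadratic inequality
    have hquadzp := hquad (z - p)
    set Szp : ℝ := ∑ i, d i * (z - p) i * (z - p) i with hSzp
    set Sxp : ℝ := ∑ i, d i * (x - p) i * (x - p) i with hSxp
    set Sxz : ℝ := ∑ i, d i * (x - z) i * (x - z) i with hSxz
    set A1 : ℝ := ∑ i, u i * (x - p) i with hA1d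
    set A2 : ℝ := ∑ i, u i * (x - z) i with hA2d
    set A3 : ℝ := ∑ i, u i * (z - p) i with hA3d
    have hA1 : A1 = -αs := by
      have h0 := hαs
      rw [hL αs] at h0
      have e : A1 = ∑ i, u i * (x i - proxi i (x i - ε * αs * u i / d i)) := by
        rw [hA1d]
        exact Finset.sum_congr rfl fun i _ => by simp [hpdef]
      linarith [e, h0]
    have hA3 : A3 = A1 - A2 := by
      rw [hA1d, hA2d, hA3d, ← Finset.sum_sub_distrib]
      exact Finset.sum_congr rfl fun i _ => by simp only [Pi.sub_apply]; ring
    have hWeq : W = 1/2 * Sxp + 1/2 * Szp - 1/2 * Sxz - ε * αs * A3 := by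
      have per : ∀ i ∈ Finset.univ, d i * (t i - p i) * (z i - p i) =
          1/2 * (d i * (x - p) i * (x - p) i) + 1/2 * (d i * (z - p) i * (z - p) i)
            - 1/2 * (d i * (x - z) i * (x - z) i) - ε * αs * (u i * (z - p) i) := by
        intro i _
        simp only [htdef, hpdef, Pi.sub_apply]
        exact aux_per (hd0 i)
      rw [hWdef, Finset.sum_congr rfl per]
      rw [Finset.sum_sub_distrib, Finset.sum_sub_distrib, Finset.sum_add_distrib,
        ← Finset.mul_sum, ← Finset.mul_sum, ← Finset.mul_sum, ← Finset.mul_sum]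
    have hreal : 1 / 2 * ((x - p) ⬝ᵥ (V *ᵥ (x - p))) ≤
        W + 1 / 2 * ((x - z) ⬝ᵥ (V *ᵥ (x - z))) := by
      rw [hdot, hdot, ← hSxp, ← hSxz, ← hA1d, ← hA2d, hWeq, hA1]
      rw [hA3, hA1] at hquadzp ⊢
      linarith [hquadzp]
    calc h p + ((1 / 2 * ((x - p) ⬝ᵥ (V *ᵥ (x - p))) : ℝ) : EReal)
        ≤ h p + (((W + 1 / 2 * ((x - z) ⬝ᵥ (V *ᵥ (x - z)))) : ℝ) : EReal) :=
          add_le_add_right (EReal.coe_le_coe_iff.2 hreal) _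
      _ = (h p + ((W : ℝ) : EReal)) + ((1 / 2 * ((x - z) ⬝ᵥ (V *ᵥ (x - z))) : ℝ) : EReal) := by
          rw [EReal.coe_add, add_assoc]
      _ ≤ h z + ((1 / 2 * ((x - z) ⬝ᵥ (V *ᵥ (x - z))) : ℝ) : EReal) := by
          refine add_le_add_left ?_ _
          rw [hsep p, hsep z]
          exact hsum
  exact ⟨hroot, part2, ⟨1 + S, hlip⟩, ⟨c0, hc0, fun a b => hmono a b⟩⟩
end
end

section
/- Let f : ℝ^N → ℝ be differentiable, μ-strongly convex with gradient L-Lipschitz continuous (0 < μ ≤ L), let 0 < γ < 1, let x, x' ∈ ℝ^N with x ≠ x', set s = x − x', y = ∇f(x) − ∇f(x'), τ = ⟨s, y⟩/‖y‖², u = (s − γ τ y)/√((1 − γ)⟨s, y⟩), and H = γ τ Id + u u^T (the 0SR1 inverse-Hessian approximation). Then a·Id ⪯ H ⪯ b·Id in the Loewner partial order, where a = γ L^{-1} > 0 and b = ((1 + γ) μ^{-1} − 2 γ L^{-1})/(1 − γ). -/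
open Matrix

noncomputable section

/-- The continuous linear functional `v ↦ ⟨w, v⟩`; `HasFDerivAt f (dotCLM (f' x)) x`
expresses that `f` is differentiable at `x` with gradient `f' x`. -/
def dotCLM {N : ℕ} (w : Fin N → ℝ) : (Fin N → ℝ) →L[ℝ] ℝ :=
  LinearMap.toContinuousLinearMap
    { toFun := fun v => w ⬝ᵥ v
      map_add' := fun a b => by simp [dotProduct_add]
      map_smul' := fun c a => by simp [dotProduct_smul] }

namespace Stmt10Aux

variable {N : ℕ}

lemma dotCLM_apply (w v : Fin N → ℝ) : dotCLM w v = w ⬝ᵥ v := rfl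

lemma dot_self_nonneg (v : Fin N → ℝ) : 0 ≤ v ⬝ᵥ v :=
  Finset.sum_nonneg fun i _ => mul_self_nonneg _

lemma euNorm_nonneg (v : Fin N → ℝ) : 0 ≤ euNorm v := Real.sqrt_nonneg _

lemma euNorm_mul_self (v : Fin N → ℝ) : euNorm v * euNorm v = v ⬝ᵥ v :=
  Real.mul_self_sqrt (dot_self_nonneg v)

lemma abs_dot_le (v w : Fin N → ℝ) : |v ⬝ᵥ w| ≤ euNorm v * euNorm w := by
  have h2 : (v ⬝ᵥ w) ^ 2 ≤ (v ⬝ᵥ v) * (w ⬝ᵥ w) := by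
    have h := Finset.sum_mul_sq_le_sq_mul_sq Finset.univ v w
    simpa [dotProduct, sq] using h
  calc |v ⬝ᵥ w| = Real.sqrt ((v ⬝ᵥ w) ^ 2) := (Real.sqrt_sq_eq_abs _).symm
    _ ≤ Real.sqrt ((v ⬝ᵥ v) * (w ⬝ᵥ w)) := Real.sqrt_le_sqrt h2
    _ = euNorm v * euNorm w := Real.sqrt_mul (dot_self_nonneg v) _

lemma euNorm_smul (c : ℝ) (v : Fin N → ℝ) : euNorm (c • v) = |c| * euNorm v := by
  unfold euNorm
  have : (c • v) ⬝ᵥ (c • v) = c ^ 2 * (v ⬝ᵥ v) := by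
    simp [smul_dotProduct, dotProduct_smul, smul_eq_mul]; ring
  rw [this, Real.sqrt_mul (sq_nonneg c), Real.sqrt_sq_eq_abs]

/-- derivative along a line -/
lemma hasDerivAt_line {f : (Fin N → ℝ) → ℝ} {f' : (Fin N → ℝ) → Fin N → ℝ}
    (hdiff : ∀ z : Fin N → ℝ, HasFDerivAt f (dotCLM (f' z)) z)
    (z d : Fin N → ℝ) (t : ℝ) :
    HasDerivAt (fun t : ℝ => f (t • d + z)) (f' (t • d + z) ⬝ᵥ d) t := by
  have h1 : HasDerivAt (fun t : ℝ => t • d + z) d t := by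
    simpa using ((hasDerivAt_id t).smul_const d).add_const z
  have := (hdiff (t • d + z)).comp_hasDerivAt t h1
  exact this

/-- first-order condition for a convex differentiable function -/
lemma first_order {g : (Fin N → ℝ) → ℝ} {g' : (Fin N → ℝ) → Fin N → ℝ}
    (hdiff : ∀ z : Fin N → ℝ, HasFDerivAt g (dotCLM (g' z)) z)
    (hconv : ConvexOn ℝ Set.univ g) (z w : Fin N → ℝ) :
    g z + g' z ⬝ᵥ (w - z) ≤ g w := by
  have hφ : ConvexOn ℝ Set.univ (fun t : ℝ => g (t • (w - z) + z)) := by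
    have h := hconv.comp_affineMap (AffineMap.lineMap z w : ℝ →ᵃ[ℝ] (Fin N → ℝ))
    have he : (g ∘ (AffineMap.lineMap z w : ℝ →ᵃ[ℝ] (Fin N → ℝ)))
        = fun t : ℝ => g (t • (w - z) + z) := by
      funext t
      simp [Function.comp, AffineMap.lineMap_apply, vsub_eq_sub, vadd_eq_add]
    rw [he] at h
    simpa using h
  have h0 := hφ.le_slope_of_hasDerivAt (Set.mem_univ (0 : ℝ)) (Set.mem_univ (1 : ℝ))
    one_pos (hasDerivAt_line hdiff z (w - z) 0)
  rw [slope_def_field] at h0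
  simp at h0
  have e := dotProduct_sub (g' z) w z
  linarith

/-- monotonicity of the gradient of a convex function -/
lemma grad_mono {g : (Fin N → ℝ) → ℝ} {g' : (Fin N → ℝ) → Fin N → ℝ}
    (hdiff : ∀ z : Fin N → ℝ, HasFDerivAt g (dotCLM (g' z)) z)
    (hconv : ConvexOn ℝ Set.univ g) (z w : Fin N → ℝ) :
    0 ≤ (g' w - g' z) ⬝ᵥ (w - z) := by
  have h1 := first_order hdiff hconv z w
  have h2 := first_order hdiff hconv w z
  have e1 : (g' w - g' z) ⬝ᵥ (w - z) = g' w ⬝ᵥ (w - z) - g' z ⬝ᵥ (w - z) :=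
    sub_dotProduct _ _ _
  have e2 : g' w ⬝ᵥ (z - w) = -(g' w ⬝ᵥ (w - z)) := by
    rw [show z - w = -(w - z) by abel, dotProduct_neg]
  linarith

/-- gradient of the squared norm -/
lemma hasFDerivAt_quad (c : ℝ) (z : Fin N → ℝ) :
    HasFDerivAt (fun w : Fin N → ℝ => c / 2 * (w ⬝ᵥ w)) (dotCLM (c • z)) z := by
  have hbase : HasFDerivAt (fun w : Fin N → ℝ => w ⬝ᵥ w)
      (∑ i : Fin N, (z i • (ContinuousLinearMap.proj i : (Fin N → ℝ) →L[ℝ] ℝ)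
        + z i • (ContinuousLinearMap.proj i : (Fin N → ℝ) →L[ℝ] ℝ))) z := by
    have hp : ∀ i : Fin N, HasFDerivAt (fun w : Fin N → ℝ => w i)
        (ContinuousLinearMap.proj i : (Fin N → ℝ) →L[ℝ] ℝ) z :=
      fun i => (ContinuousLinearMap.proj (R := ℝ) (φ := fun _ : Fin N => ℝ) i).hasFDerivAt
    have : (fun w : Fin N → ℝ => w ⬝ᵥ w) = fun w => ∑ i : Fin N, w i * w i := rfl
    rw [this]
    exact HasFDerivAt.fun_sum fun i _ => (hp i).mul (hp i)
  have hc := hbase.const_mul (c / 2)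
  have heq : (c / 2) • (∑ i : Fin N, (z i • (ContinuousLinearMap.proj i : (Fin N → ℝ) →L[ℝ] ℝ)
        + z i • (ContinuousLinearMap.proj i : (Fin N → ℝ) →L[ℝ] ℝ))) = dotCLM (c • z) := by
    apply ContinuousLinearMap.ext
    intro v
    simp [dotCLM_apply, smul_dotProduct, dotProduct, Finset.mul_sum,
      ContinuousLinearMap.proj_apply, smul_eq_mul]
    apply Finset.sum_congr rfl
    intros i _
    ring
  rw [heq] at hc
  exact hc

end Stmt10Aux

open Stmt10Aux

set_option maxHeartbeats 1000000

/-- Eigenvalue bounds for the 0SR1 inverse-Hessian approximation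
`H = γτ·Id + u uᵀ` with `τ = ⟨s,y⟩/‖y‖²`, `u = (s - γτ y)/√((1-γ)⟨s,y⟩)`:
`a·Id ⪯ H ⪯ b·Id` with `a = γ/L` and `b = ((1+γ)/μ - 2γ/L)/(1-γ)`. -/
theorem stmt_10 {N : ℕ} (μ L γ : ℝ) (hμ : 0 < μ) (hμL : μ ≤ L)
    (hγ0 : 0 < γ) (hγ1 : γ < 1)
    (f : (Fin N → ℝ) → ℝ) (f' : (Fin N → ℝ) → Fin N → ℝ)
    (hdiff : ∀ z : Fin N → ℝ, HasFDerivAt f (dotCLM (f' z)) z)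
    (hsc : ConvexOn ℝ Set.univ fun z => f z - μ / 2 * (z ⬝ᵥ z))
    (hlip : ∀ z w : Fin N → ℝ, euNorm (f' z - f' w) ≤ L * euNorm (z - w))
    (x x' : Fin N → ℝ) (hne : x ≠ x')
    (s y : Fin N → ℝ) (hs : s = x - x') (hy : y = f' x - f' x')
    (τ : ℝ) (hτ : τ = (s ⬝ᵥ y) / (y ⬝ᵥ y))
    (u : Fin N → ℝ) (hu : u = (Real.sqrt ((1 - γ) * (s ⬝ᵥ y)))⁻¹ • (s - (γ * τ) • y))
    (H : Matrix (Fin N) (Fin N) ℝ)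
    (hH : H = (γ * τ) • (1 : Matrix (Fin N) (Fin N) ℝ) + vecMulVec u u)
    (a b : ℝ) (ha : a = γ / L) (hb : b = ((1 + γ) / μ - 2 * γ / L) / (1 - γ)) :
    (H - a • (1 : Matrix (Fin N) (Fin N) ℝ)).PosSemidef ∧
    (b • (1 : Matrix (Fin N) (Fin N) ℝ) - H).PosSemidef := by
  have hL : 0 < L := lt_of_lt_of_le hμ hμL
  -- the gradient of g = f - μ/2 ‖·‖²
  set g : (Fin N → ℝ) → ℝ := fun z => f z - μ / 2 * (z ⬝ᵥ z) with hg
  set g' : (Fin N → ℝ) → Fin N → ℝ := fun z => f' z - μ • z with hg'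
  have hdiffg : ∀ z : Fin N → ℝ, HasFDerivAt g (dotCLM (g' z)) z := by
    intro z
    have h := (hdiff z).sub (hasFDerivAt_quad μ z)
    have he : dotCLM (f' z) - dotCLM (μ • z) = dotCLM (g' z) := by
      apply ContinuousLinearMap.ext
      intro v
      simp [hg', dotCLM_apply, sub_dotProduct, smul_dotProduct, smul_eq_mul]
    rwa [he] at h
  -- first-order condition for f itself
  have f_foc : ∀ z w : Fin N → ℝ, f z + f' z ⬝ᵥ (w - z) ≤ f w := by
    intro z w
    have h := first_order hdiffg hsc z w
    have e1 : g' z ⬝ᵥ (w - z) = f' z ⬝ᵥ (w - z) - μ * (z ⬝ᵥ (w - z)) := by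
      simp [hg', sub_dotProduct, smul_dotProduct, smul_eq_mul,
        dotProduct_sub]
      ring
    have e2 : (w - z) ⬝ᵥ (w - z) = w ⬝ᵥ w - 2 * (z ⬝ᵥ w) + z ⬝ᵥ z := by
      simp [sub_dotProduct, dotProduct_sub, dotProduct_comm w z]
      ring
    have e3 : z ⬝ᵥ (w - z) = z ⬝ᵥ w - z ⬝ᵥ z := dotProduct_sub _ _ _
    have h4 : 0 ≤ (w - z) ⬝ᵥ (w - z) := dot_self_nonneg _
    simp only [hg] at h
    rw [e1] at h
    nlinarith [h4, e2, e3]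
  -- descent lemma
  have descent : ∀ z d : Fin N → ℝ, f (z + d) ≤ f z + f' z ⬝ᵥ d + L / 2 * (d ⬝ᵥ d) := by
    intro z d
    set φ : ℝ → ℝ := fun t => f (t • d + z) with hφ
    set φ' : ℝ → ℝ := fun t => f' (t • d + z) ⬝ᵥ d with hφ'
    have hder : ∀ t : ℝ, HasDerivAt φ (φ' t) t := fun t => hasDerivAt_line hdiff z d t
    have hlipφ : ∀ t r : ℝ, |φ' t - φ' r| ≤ L * (d ⬝ᵥ d) * |t - r| := by
      intro t r
      have e : φ' t - φ' r = (f' (t • d + z) - f' (r • d + z)) ⬝ᵥ d := by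
        simp [hφ', sub_dotProduct]
      rw [e]
      have h1 : |(f' (t • d + z) - f' (r • d + z)) ⬝ᵥ d|
          ≤ euNorm (f' (t • d + z) - f' (r • d + z)) * euNorm d := abs_dot_le _ _
      have h2 : euNorm (f' (t • d + z) - f' (r • d + z)) ≤ L * (|t - r| * euNorm d) := by
        have := hlip (t • d + z) (r • d + z)
        have he : (t • d + z) - (r • d + z) = (t - r) • d := by
          rw [sub_smul]; abel
        rwa [he, euNorm_smul] at this
      calc |(f' (t • d + z) - f' (r • d + z)) ⬝ᵥ d|
          ≤ euNorm (f' (t • d + z) - f' (r • d + z)) * euNorm d := h1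
        _ ≤ (L * (|t - r| * euNorm d)) * euNorm d :=
            mul_le_mul_of_nonneg_right h2 (euNorm_nonneg d)
        _ = L * (d ⬝ᵥ d) * |t - r| := by
            rw [show (L * (|t - r| * euNorm d)) * euNorm d
              = L * (euNorm d * euNorm d) * |t - r| by ring, euNorm_mul_self]
    have hcont : Continuous φ' := by
      have hlw : LipschitzWith (Real.toNNReal (L * (d ⬝ᵥ d))) φ' := by
        apply LipschitzWith.of_dist_le_mul
        intro t r
        rw [Real.dist_eq, Real.dist_eq, Real.coe_toNNReal _
          (mul_nonneg hL.le (dot_self_nonneg d))]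
        exact hlipφ t r
      exact hlw.continuous
    have key : φ 1 - φ 0 = ∫ t in (0:ℝ)..1, φ' t :=
      (intervalIntegral.integral_eq_sub_of_hasDerivAt (fun t _ => hder t)
        (hcont.intervalIntegrable 0 1)).symm
    have bound : (∫ t in (0:ℝ)..1, φ' t) ≤ ∫ t in (0:ℝ)..1, (φ' 0 + L * (d ⬝ᵥ d) * t) := by
      apply intervalIntegral.integral_mono_on zero_le_one (hcont.intervalIntegrable 0 1)
        ((by fun_prop :
          Continuous fun t : ℝ => φ' 0 + L * (d ⬝ᵥ d) * t).intervalIntegrable 0 1)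
      intro t ht
      have h1 : φ' t - φ' 0 ≤ L * (d ⬝ᵥ d) * |t - 0| :=
        (le_abs_self _).trans (hlipφ t 0)
      rw [sub_zero, abs_of_nonneg ht.1] at h1
      linarith
    have eval : (∫ t in (0:ℝ)..1, (φ' 0 + L * (d ⬝ᵥ d) * t)) = φ' 0 + L * (d ⬝ᵥ d) / 2 := by
      rw [intervalIntegral.integral_add (intervalIntegrable_const)
        (((by fun_prop : Continuous fun t : ℝ => L * (d ⬝ᵥ d) * t).intervalIntegrable 0 1)),
        intervalIntegral.integral_const]
      have : (∫ t in (0:ℝ)..1, L * (d ⬝ᵥ d) * t) = L * (d ⬝ᵥ d) * ((1:ℝ)^2 - 0^2) / 2 := by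
        rw [intervalIntegral.integral_const_mul, integral_id]
        ring
      rw [this]
      simp
    have hφ1 : φ 1 = f (z + d) := by simp [hφ, add_comm]
    have hφ0 : φ 0 = f z := by simp [hφ]
    have hφ'0 : φ' 0 = f' z ⬝ᵥ d := by simp [hφ']
    rw [hφ1, hφ0] at key
    have htot := key.le.trans (bound.trans eval.le)
    rw [hφ'0] at htot
    linarith
  -- cocoercivity half-inequality
  have half : ∀ z w : Fin N → ℝ,
      f z + f' z ⬝ᵥ (w - z)
        + 1 / (2 * L) * ((f' w - f' z) ⬝ᵥ (f' w - f' z)) ≤ f w := by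
    intro z w
    set r : Fin N → ℝ := f' w - f' z with hr
    set d : Fin N → ℝ := -(L⁻¹ • r) with hd
    have h1 := f_foc z (w + d)
    have h2 := descent w d
    set R : ℝ := r ⬝ᵥ r with hR
    have hd1 : r ⬝ᵥ d = -(L⁻¹ * R) := by
      simp [hd, dotProduct_neg, dotProduct_smul, smul_eq_mul, hR]
    have hd2 : d ⬝ᵥ d = L⁻¹ * L⁻¹ * R := by
      simp [hd, dotProduct_neg, neg_dotProduct, dotProduct_smul,
        smul_dotProduct, smul_eq_mul, hR]
      ring
    have hd3 : f' z ⬝ᵥ (w + d - z) = f' z ⬝ᵥ (w - z) + f' z ⬝ᵥ d := by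
      rw [show w + d - z = (w - z) + d by abel, dotProduct_add]
    have hd5 : f' w ⬝ᵥ d - f' z ⬝ᵥ d = r ⬝ᵥ d := (sub_dotProduct _ _ _).symm
    have hLL : L⁻¹ * L = 1 := inv_mul_cancel₀ hL.ne'
    have e : -(L⁻¹ * R) + L / 2 * (L⁻¹ * L⁻¹ * R) = -(1 / (2 * L) * R) := by
      field_simp
      ring
    rw [hd3] at h1
    nlinarith [h1, h2, hd1, hd2, hd5, e]
  -- cocoercivity
  have coco : y ⬝ᵥ y ≤ L * (s ⬝ᵥ y) := by
    have h1 := half x' x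
    have h2 := half x x'
    have hRR : (f' x' - f' x) ⬝ᵥ (f' x' - f' x) = (f' x - f' x') ⬝ᵥ (f' x - f' x') := by
      rw [show f' x' - f' x = -(f' x - f' x') by abel, neg_dotProduct,
        dotProduct_neg, neg_neg]
    rw [hRR] at h2
    have hsum : f' x' ⬝ᵥ (x - x') + f' x ⬝ᵥ (x' - x)
        + 2 * (1 / (2 * L) * ((f' x - f' x') ⬝ᵥ (f' x - f' x'))) ≤ 0 := by linarith
    have e1 : f' x ⬝ᵥ (x' - x) = -(f' x ⬝ᵥ (x - x')) := by
      rw [show x' - x = -(x - x') by abel, dotProduct_neg]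
    have e2 : f' x ⬝ᵥ (x - x') - f' x' ⬝ᵥ (x - x') = (f' x - f' x') ⬝ᵥ (x - x') :=
      (sub_dotProduct _ _ _).symm
    have e3 : (f' x - f' x') ⬝ᵥ (x - x') = (x - x') ⬝ᵥ (f' x - f' x') :=
      dotProduct_comm _ _
    rw [hy, hs]
    set D : ℝ := (f' x - f' x') ⬝ᵥ (f' x - f' x') with hD
    set P : ℝ := (x - x') ⬝ᵥ (f' x - f' x') with hP
    rw [e1] at hsum
    have h6 : 1 / L * D ≤ P := by
      have hPD : 2 * (1 / (2 * L) * D) = 1 / L * D := by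
        field_simp
      linarith [hsum, e2, e3]
    have h7 := mul_le_mul_of_nonneg_left h6 hL.le
    have h8 : L * (1 / L * D) = D := by field_simp
    linarith
  -- strong monotonicity
  have mono : μ * (s ⬝ᵥ s) ≤ s ⬝ᵥ y := by
    have h := grad_mono hdiffg hsc x' x
    have e0 : g' x - g' x' = y - μ • s := by
      rw [hg', hy, hs]
      simp only
      module
    rw [e0, hs.symm] at h
    have e1 : (y - μ • s) ⬝ᵥ s = y ⬝ᵥ s - μ * (s ⬝ᵥ s) := by
      simp [sub_dotProduct, smul_dotProduct, smul_eq_mul]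
    have e2 : y ⬝ᵥ s = s ⬝ᵥ y := dotProduct_comm _ _
    linarith
  -- basic positivity facts
  have hsne : s ≠ 0 := by rw [hs]; exact sub_ne_zero.mpr hne
  have hns : 0 < s ⬝ᵥ s := by
    rcases (dot_self_nonneg s).lt_or_eq with h | h
    · exact h
    · exact absurd (dotProduct_self_eq_zero.mp h.symm) hsne
  have hp : 0 < s ⬝ᵥ y := lt_of_lt_of_le (mul_pos hμ hns) mono
  have hyne : y ≠ 0 := by
    intro h
    rw [h, dotProduct_zero] at hp
    exact lt_irrefl 0 hp
  have hny : 0 < y ⬝ᵥ y := by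
    rcases (dot_self_nonneg y).lt_or_eq with h | h
    · exact h
    · exact absurd (dotProduct_self_eq_zero.mp h.symm) hyne
  have hτny : τ * (y ⬝ᵥ y) = s ⬝ᵥ y := by rw [hτ]; field_simp
  have hτL : 1 / L ≤ τ := by
    rw [hτ, div_le_div_iff₀ hL hny]
    linarith
  have hτpos : 0 < τ := lt_of_lt_of_le (by positivity) hτL
  -- eigenvalue of u uᵀ : u ⬝ᵥ u
  have h1γ : 0 < 1 - γ := by linarith
  have h1γp : 0 < (1 - γ) * (s ⬝ᵥ y) := mul_pos h1γ hp
  have hww : (s - (γ * τ) • y) ⬝ᵥ (s - (γ * τ) • y)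
      = s ⬝ᵥ s - 2 * (γ * τ) * (s ⬝ᵥ y) + (γ * τ) ^ 2 * (y ⬝ᵥ y) := by
    simp [sub_dotProduct, dotProduct_sub, smul_dotProduct,
      dotProduct_smul, smul_eq_mul, dotProduct_comm y s]
    ring
  have huu : u ⬝ᵥ u = (s ⬝ᵥ s - 2 * (γ * τ) * (s ⬝ᵥ y) + (γ * τ) ^ 2 * (y ⬝ᵥ y))
      / ((1 - γ) * (s ⬝ᵥ y)) := by
    rw [hu]
    rw [smul_dotProduct, dotProduct_smul, hww, smul_eq_mul, smul_eq_mul]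
    have : (Real.sqrt ((1 - γ) * (s ⬝ᵥ y)))⁻¹ * ((Real.sqrt ((1 - γ) * (s ⬝ᵥ y)))⁻¹
        * (s ⬝ᵥ s - 2 * (γ * τ) * (s ⬝ᵥ y) + (γ * τ) ^ 2 * (y ⬝ᵥ y)))
        = (Real.sqrt ((1 - γ) * (s ⬝ᵥ y)) * Real.sqrt ((1 - γ) * (s ⬝ᵥ y)))⁻¹
        * (s ⬝ᵥ s - 2 * (γ * τ) * (s ⬝ᵥ y) + (γ * τ) ^ 2 * (y ⬝ᵥ y)) := by
      rw [mul_inv]; ring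
    rw [this, Real.mul_self_sqrt h1γp.le, inv_mul_eq_div]
  -- scalar bounds
  have ha_le : a ≤ γ * τ := by
    rw [ha]
    rw [div_eq_mul_one_div]
    exact mul_le_mul_of_nonneg_left hτL hγ0.le
  have hb_ge : u ⬝ᵥ u ≤ b - γ * τ := by
    rw [huu, div_le_iff₀ h1γp]
    have hsub : (γ * τ) ^ 2 * (y ⬝ᵥ y) = γ ^ 2 * τ * (s ⬝ᵥ y) := by
      rw [show (γ * τ) ^ 2 * (y ⬝ᵥ y) = γ ^ 2 * τ * (τ * (y ⬝ᵥ y)) by ring, hτny]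
    have hb1γ : b * (1 - γ) = (1 + γ) * (1 / μ) - 2 * γ * (1 / L) := by
      rw [hb]
      field_simp
    have hns2 : s ⬝ᵥ s ≤ (1 / μ) * (s ⬝ᵥ y) := by
      rw [div_mul_eq_mul_div, le_div_iff₀ hμ]
      linarith [mono]
    have hτ2 : γ * (1 / L) * (s ⬝ᵥ y) ≤ γ * τ * (s ⬝ᵥ y) := by
      apply mul_le_mul_of_nonneg_right _ hp.le
      exact mul_le_mul_of_nonneg_left hτL hγ0.le
    have hinv : 1 / L ≤ 1 / μ := one_div_le_one_div_of_le hμ hμL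
    nlinarith [hsub, hb1γ, hns2, hτ2, hinv, hp, hγ0, mul_le_mul_of_nonneg_right hinv
      (mul_nonneg hγ0.le hp.le)]
  -- matrix computations
  have hvmv : ∀ v : Fin N → ℝ, vecMulVec u u *ᵥ v = (u ⬝ᵥ v) • u := by
    intro v
    ext i
    simp only [Matrix.mulVec, Matrix.vecMulVec_apply, dotProduct, Pi.smul_apply,
      smul_eq_mul, Finset.mul_sum, Finset.sum_mul]
    apply Finset.sum_congr rfl
    intros j _
    ring
  have hquad : ∀ v : Fin N → ℝ, v ⬝ᵥ (H *ᵥ v) = (γ * τ) * (v ⬝ᵥ v) + (u ⬝ᵥ v) ^ 2 := by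
    intro v
    rw [hH, Matrix.add_mulVec, dotProduct_add, Matrix.smul_mulVec,
      Matrix.one_mulVec, dotProduct_smul, hvmv, dotProduct_smul,
      smul_eq_mul, smul_eq_mul, dotProduct_comm v u]
    ring
  have hone : ∀ (c : ℝ) (v : Fin N → ℝ), v ⬝ᵥ ((c • (1 : Matrix (Fin N) (Fin N) ℝ)) *ᵥ v)
      = c * (v ⬝ᵥ v) := by
    intro c v
    rw [Matrix.smul_mulVec, Matrix.one_mulVec, dotProduct_smul, smul_eq_mul]
  have hermH : H.IsHermitian := by
    rw [hH]
    apply Matrix.IsHermitian.add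
    · ext i j
      simp [Matrix.conjTranspose_apply, Matrix.one_apply, Matrix.smul_apply, eq_comm]
    · ext i j
      simp [Matrix.conjTranspose_apply, Matrix.vecMulVec_apply, mul_comm]
  have herm1 : ∀ c : ℝ, (c • (1 : Matrix (Fin N) (Fin N) ℝ)).IsHermitian := by
    intro c
    ext i j
    simp [Matrix.conjTranspose_apply, Matrix.one_apply, Matrix.smul_apply, eq_comm]
  have hstar : ∀ v : Fin N → ℝ, star v = v := fun v => funext fun i => star_trivial _
  constructor
  · refine Matrix.PosSemidef.of_dotProduct_mulVec_nonneg (hermH.sub (herm1 a)) ?_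
    intro v
    rw [hstar v, Matrix.sub_mulVec, dotProduct_sub, hquad v, hone a v]
    nlinarith [sq_nonneg (u ⬝ᵥ v), dot_self_nonneg v, ha_le]
  · refine Matrix.PosSemidef.of_dotProduct_mulVec_nonneg ((herm1 b).sub hermH) ?_
    intro v
    rw [hstar v, Matrix.sub_mulVec, dotProduct_sub, hquad v, hone b v]
    have hcs : (u ⬝ᵥ v) ^ 2 ≤ (u ⬝ᵥ u) * (v ⬝ᵥ v) := by
      have h := Finset.sum_mul_sq_le_sq_mul_sq Finset.univ u v
      simpa [dotProduct, sq] using h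
    nlinarith [hcs, dot_self_nonneg v, hb_ge, mul_le_mul_of_nonneg_right hb_ge
      (dot_self_nonneg v)]
end
end

section
/- Let f : ℝ^N → ℝ be differentiable, μ-strongly convex with gradient L-Lipschitz continuous (0 < μ ≤ L), let γ > 0, let x, x' ∈ ℝ^N with x ≠ x', set s = x − x', y = ∇f(x) − ∇f(x'), ρ = 1/⟨s, y⟩, τ = ⟨s, y⟩/‖y‖², u_γ = s − (γτ/(1+γ)) y, and H = γτ·Id + ρ(1+γ) u_γ u_γ^T − ρ γ²τ²/(1+γ) · y y^T (the zero-memory BFGS inverse-Hessian approximation). Then a·Id ⪯ H ⪯ b·Id in the Loewner partial order, where a = (γ/(1+γ)) L^{-1} > 0 and b = (1 + 2γ) μ^{-1} − ((2+γ)γ/(1+γ)) L^{-1}. -/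
open Matrix

noncomputable section

set_option maxHeartbeats 1000000

lemma dotCLM_apply (w v : Fin N → ℝ) : dotCLM w v = w ⬝ᵥ v := rfl

lemma dot_self_nonneg (v : Fin N → ℝ) : 0 ≤ v ⬝ᵥ v :=
  Finset.sum_nonneg fun i _ => mul_self_nonneg _

lemma cs_sq (u v : Fin N → ℝ) : (u ⬝ᵥ v)^2 ≤ (u ⬝ᵥ u) * (v ⬝ᵥ v) := by
  simpa [dotProduct, sq] using Finset.sum_mul_sq_le_sq_mul_sq Finset.univ u v

lemma euNorm_mul_self (v : Fin N → ℝ) : euNorm v * euNorm v = v ⬝ᵥ v :=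
  Real.mul_self_sqrt (dot_self_nonneg v)

lemma dot_le_norms (u v : Fin N → ℝ) : u ⬝ᵥ v ≤ euNorm u * euNorm v := by
  have h : |u ⬝ᵥ v| ≤ euNorm u * euNorm v := by
    rw [← Real.sqrt_sq_eq_abs, euNorm, euNorm, ← Real.sqrt_mul (dot_self_nonneg u)]
    exact Real.sqrt_le_sqrt (cs_sq u v)
  exact (le_abs_self _).trans h

lemma euNorm_smul (t : ℝ) (v : Fin N → ℝ) : euNorm (t • v) = |t| * euNorm v := by
  rw [euNorm, euNorm, smul_dotProduct, dotProduct_smul, smul_eq_mul, smul_eq_mul,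
    ← mul_assoc, ← sq, Real.sqrt_mul (sq_nonneg t), Real.sqrt_sq_eq_abs]

lemma hasDerivAt_line (g : (Fin N → ℝ) → ℝ) (g' : (Fin N → ℝ) → Fin N → ℝ)
    (hd : ∀ z, HasFDerivAt g (dotCLM (g' z)) z) (p d : Fin N → ℝ) (t : ℝ) :
    HasDerivAt (fun t : ℝ => g (p + t • d)) (g' (p + t • d) ⬝ᵥ d) t := by
  have h1 : HasDerivAt (fun t : ℝ => p + t • d) d t := by
    simpa using ((hasDerivAt_id t).smul_const d).const_add p
  simpa [dotCLM_apply, Function.comp_def] using (hd (p + t • d)).comp_hasDerivAt t h1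



lemma tangent (g : (Fin N → ℝ) → ℝ) (g' : (Fin N → ℝ) → Fin N → ℝ)
    (hd : ∀ z, HasFDerivAt g (dotCLM (g' z)) z)
    (hconv : ConvexOn ℝ Set.univ g) (p w : Fin N → ℝ) :
    g p + g' p ⬝ᵥ (w - p) ≤ g w := by
  have hψ : ConvexOn ℝ Set.univ (fun t : ℝ => g (p + t • (w - p))) := by
    have h := hconv.comp_affineMap (AffineMap.lineMap p w)
    have he : (g ∘ (AffineMap.lineMap p w)) = fun t : ℝ => g (p + t • (w - p)) := by
      funext t
      simp [AffineMap.lineMap_apply, Function.comp]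
      ring_nf
    rw [he] at h
    simpa using h
  have hder : HasDerivAt (fun t : ℝ => g (p + t • (w - p))) (g' p ⬝ᵥ (w - p)) 0 := by
    simpa using hasDerivAt_line g g' hd p (w - p) 0
  have := hψ.le_slope_of_hasDerivAt (Set.mem_univ (0:ℝ)) (Set.mem_univ (1:ℝ)) one_pos hder
  rw [slope_def_field] at this
  simp at this
  rw [dotProduct_sub]
  linarith

lemma grad_mono (g : (Fin N → ℝ) → ℝ) (g' : (Fin N → ℝ) → Fin N → ℝ)
    (hd : ∀ z, HasFDerivAt g (dotCLM (g' z)) z)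
    (hconv : ConvexOn ℝ Set.univ g) (p w : Fin N → ℝ) :
    0 ≤ (g' w - g' p) ⬝ᵥ (w - p) := by
  have h1 := tangent g g' hd hconv p w
  have h2 := tangent g g' hd hconv w p
  have e1 : g' p ⬝ᵥ (w - p) = g' p ⬝ᵥ w - g' p ⬝ᵥ p := dotProduct_sub _ _ _
  have e2 : g' w ⬝ᵥ (p - w) = g' w ⬝ᵥ p - g' w ⬝ᵥ w := dotProduct_sub _ _ _
  have e3 : (g' w - g' p) ⬝ᵥ (w - p)
      = (g' w ⬝ᵥ w - g' w ⬝ᵥ p) - (g' p ⬝ᵥ w - g' p ⬝ᵥ p) := by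
    rw [sub_dotProduct, dotProduct_sub, dotProduct_sub]
  rw [e3]; linarith



lemma hasFDerivAt_dot_self (z : Fin N → ℝ) :
    HasFDerivAt (fun z : Fin N → ℝ => z ⬝ᵥ z) (dotCLM ((2:ℝ) • z)) z := by
  have hp : ∀ i : Fin N, HasFDerivAt (fun z : Fin N → ℝ => z i)
      (ContinuousLinearMap.proj i : (Fin N → ℝ) →L[ℝ] ℝ) z :=
    fun i => (ContinuousLinearMap.proj i : (Fin N → ℝ) →L[ℝ] ℝ).hasFDerivAt
  have h : ∀ i : Fin N, HasFDerivAt (fun z : Fin N → ℝ => z i * z i)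
      (z i • ContinuousLinearMap.proj i + z i • ContinuousLinearMap.proj i) z :=
    fun i => (hp i).mul (hp i)
  have hsum : HasFDerivAt (fun z : Fin N → ℝ => ∑ i, z i * z i)
      (∑ i, (z i • ContinuousLinearMap.proj i + z i • ContinuousLinearMap.proj i)) z :=
    HasFDerivAt.fun_sum (fun i _ => h i)
  have he : (∑ i, (z i • ContinuousLinearMap.proj i + z i • ContinuousLinearMap.proj i))
      = dotCLM ((2:ℝ) • z) := by
    ext v
    simp [dotCLM_apply, dotProduct, ContinuousLinearMap.proj_apply,
      Finset.sum_add_distrib, smul_eq_mul, Pi.smul_apply]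
    ring_nf
    rw [Finset.sum_mul]
  rw [← he]
  exact hsum

lemma hasFDerivAt_dotc (c z : Fin N → ℝ) :
    HasFDerivAt (fun z : Fin N → ℝ => c ⬝ᵥ z) (dotCLM c) z :=
  (dotCLM c).hasFDerivAt

lemma convexOn_dot_self : ConvexOn ℝ Set.univ (fun z : Fin N → ℝ => z ⬝ᵥ z) := by
  refine ⟨convex_univ, fun u _ v _ a b ha hb hab => ?_⟩
  have hd : 0 ≤ (u - v) ⬝ᵥ (u - v) := Finset.sum_nonneg fun i _ => mul_self_nonneg _
  rw [sub_dotProduct, dotProduct_sub, dotProduct_sub] at hd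
  have hc : v ⬝ᵥ u = u ⬝ᵥ v := dotProduct_comm _ _
  simp only [add_dotProduct, dotProduct_add, smul_dotProduct, dotProduct_smul, smul_eq_mul]
  rw [hc] at hd ⊢
  have hb' : b = 1 - a := by linarith
  subst hb'
  nlinarith [mul_nonneg (mul_nonneg ha hb) hd]

lemma convexOn_linear (c : Fin N → ℝ) : ConvexOn ℝ Set.univ (fun z : Fin N → ℝ => c ⬝ᵥ z) := by
  refine ⟨convex_univ, fun u _ v _ a b ha hb hab => ?_⟩
  simp only [dotProduct_add, dotProduct_smul, smul_eq_mul]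
  exact le_of_eq (by ring)
section Descent
variable {N : ℕ}

lemma descent (L : ℝ) (hL : 0 < L) (g : (Fin N → ℝ) → ℝ) (g' : (Fin N → ℝ) → Fin N → ℝ)
    (hd : ∀ z, HasFDerivAt g (dotCLM (g' z)) z)
    (hlip : ∀ z w : Fin N → ℝ, euNorm (g' z - g' w) ≤ L * euNorm (z - w))
    (z d : Fin N → ℝ) :
    g (z + d) ≤ g z + g' z ⬝ᵥ d + L / 2 * (d ⬝ᵥ d) := by
  set D := d ⬝ᵥ d with hD
  set k : ℝ → ℝ := fun t => g (z + t • d) - t * (g' z ⬝ᵥ d) - L / 2 * t ^ 2 * D with hk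
  have hkder : ∀ t : ℝ, HasDerivAt k
      ((g' (z + t • d) ⬝ᵥ d) - g' z ⬝ᵥ d - L / 2 * (2 * t) * D) t := by
    intro t
    have h1 := hasDerivAt_line g g' hd z d t
    have h2 : HasDerivAt (fun t : ℝ => t * (g' z ⬝ᵥ d)) (g' z ⬝ᵥ d) t :=
      hasDerivAt_mul_const _
    have h3 : HasDerivAt (fun t : ℝ => L / 2 * t ^ 2 * D) (L / 2 * (2 * t) * D) t := by
      have := ((hasDerivAt_pow 2 t).const_mul (L / 2)).mul_const D
      simpa using this
    exact (h1.sub h2).sub h3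
  have hcont : Continuous k := by
    have : Differentiable ℝ k := fun t => (hkder t).differentiableAt
    exact this.continuous
  have hderle : ∀ t ∈ Set.Ioo (0:ℝ) 1, deriv k t ≤ 0 := by
    intro t ht
    rw [(hkder t).deriv]
    have hbound : (g' (z + t • d) - g' z) ⬝ᵥ d ≤ L * t * D := by
      have h1 : (g' (z + t • d) - g' z) ⬝ᵥ d ≤ euNorm (g' (z + t • d) - g' z) * euNorm d :=
        dot_le_norms _ _
      have h2 : euNorm (g' (z + t • d) - g' z) ≤ L * euNorm (t • d) := by
        have := hlip (z + t • d) z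
        simpa using this
      have h3 : euNorm (t • d) = t * euNorm d := by
        rw [euNorm_smul, abs_of_pos ht.1]
      have h4 : euNorm d * euNorm d = D := euNorm_mul_self d
      have h5 : 0 ≤ euNorm d := Real.sqrt_nonneg _
      calc (g' (z + t • d) - g' z) ⬝ᵥ d ≤ euNorm (g' (z + t • d) - g' z) * euNorm d := h1
        _ ≤ L * euNorm (t • d) * euNorm d := by
            apply mul_le_mul_of_nonneg_right h2 h5
        _ = L * t * (euNorm d * euNorm d) := by rw [h3]; ring
        _ = L * t * D := by rw [h4]
    rw [sub_dotProduct] at hbound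
    linarith
  have hanti : AntitoneOn k (Set.Icc (0:ℝ) 1) := by
    apply antitoneOn_of_deriv_nonpos (convex_Icc 0 1) hcont.continuousOn
    · intro t _
      exact ((hkder t).differentiableAt).differentiableWithinAt
    · intro t ht
      rw [interior_Icc] at ht
      exact hderle t ht
  have h10 : k 1 ≤ k 0 :=
    hanti (Set.left_mem_Icc.2 zero_le_one) (Set.right_mem_Icc.2 zero_le_one) zero_le_one
  have e0 : k 0 = g z := by simp [hk]
  have e1 : k 1 = g (z + d) - g' z ⬝ᵥ d - L / 2 * D := by
    simp [hk]
  rw [e0, e1] at h10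
  linarith
end Descent
section Coco
variable {N : ℕ}

lemma one_sided (L : ℝ) (hL : 0 < L) (f : (Fin N → ℝ) → ℝ) (f' : (Fin N → ℝ) → Fin N → ℝ)
    (hdiff : ∀ z, HasFDerivAt f (dotCLM (f' z)) z)
    (hconvf : ConvexOn ℝ Set.univ f)
    (hlip : ∀ z w : Fin N → ℝ, euNorm (f' z - f' w) ≤ L * euNorm (z - w))
    (p w : Fin N → ℝ) :
    f w - f' w ⬝ᵥ w ≤ f p - f' w ⬝ᵥ p
      - 1 / (2 * L) * ((f' p - f' w) ⬝ᵥ (f' p - f' w)) := by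
  set φ : (Fin N → ℝ) → ℝ := fun z => f z - f' w ⬝ᵥ z with hφ
  set φ' : (Fin N → ℝ) → Fin N → ℝ := fun z => f' z - f' w with hφ'
  have hdφ : ∀ z, HasFDerivAt φ (dotCLM (φ' z)) z := by
    intro z
    have h := (hdiff z).sub (hasFDerivAt_dotc (f' w) z)
    have he : dotCLM (φ' z) = dotCLM (f' z) - dotCLM (f' w) := by
      ext v; simp [dotCLM_apply, hφ', sub_dotProduct]
    rw [he]
    exact h
  have hconvφ : ConvexOn ℝ Set.univ φ := by
    have h := hconvf.add (convexOn_linear (-(f' w)))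
    have he : (f + fun z : Fin N → ℝ => (-(f' w)) ⬝ᵥ z) = φ := by
      funext z; simp [hφ, neg_dotProduct]; ring
    rwa [he] at h
  have hlipφ : ∀ z v : Fin N → ℝ, euNorm (φ' z - φ' v) ≤ L * euNorm (z - v) := by
    intro z v
    have he : φ' z - φ' v = f' z - f' v := by
      simp only [hφ']; abel
    rw [he]; exact hlip z v
  set d : Fin N → ℝ := (-(L⁻¹)) • (φ' p) with hd
  set Yp : ℝ := φ' p ⬝ᵥ φ' p with hYp
  have hYnn : 0 ≤ Yp := dot_self_nonneg _
  have hdesc := descent L hL φ φ' hdφ hlipφ p d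
  have htan := tangent φ φ' hdφ hconvφ w (p + d)
  have hzero : φ' w = 0 := by simp [hφ']
  rw [hzero, zero_dotProduct, add_zero] at htan
  have e1 : φ' p ⬝ᵥ d = -(L⁻¹) * Yp := by
    rw [hd, dotProduct_smul, smul_eq_mul, ← hYp]
  have e2 : d ⬝ᵥ d = L⁻¹ * L⁻¹ * Yp := by
    rw [hd, smul_dotProduct, dotProduct_smul, smul_eq_mul, smul_eq_mul, ← hYp]; ring
  have harith : (-(L⁻¹)) * Yp + L / 2 * (L⁻¹ * L⁻¹ * Yp) = -(1 / (2 * L)) * Yp := by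
    field_simp
    ring
  have hchain : φ w ≤ φ p - 1 / (2 * L) * Yp := by
    rw [e1, e2] at hdesc
    calc φ w ≤ φ (p + d) := htan
      _ ≤ φ p + (-(L⁻¹)) * Yp + L / 2 * (L⁻¹ * L⁻¹ * Yp) := hdesc
      _ = φ p - 1 / (2 * L) * Yp := by rw [add_assoc, harith]; ring
  have eYp : Yp = (f' p - f' w) ⬝ᵥ (f' p - f' w) := rfl
  rw [hφ] at hchain
  simp only at hchain
  rw [eYp] at hchain
  linarith

lemma cocoercive (L : ℝ) (hL : 0 < L) (f : (Fin N → ℝ) → ℝ) (f' : (Fin N → ℝ) → Fin N → ℝ)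
    (hdiff : ∀ z, HasFDerivAt f (dotCLM (f' z)) z)
    (hconvf : ConvexOn ℝ Set.univ f)
    (hlip : ∀ z w : Fin N → ℝ, euNorm (f' z - f' w) ≤ L * euNorm (z - w))
    (p w : Fin N → ℝ) :
    (f' p - f' w) ⬝ᵥ (f' p - f' w) ≤ L * ((f' p - f' w) ⬝ᵥ (p - w)) := by
  have h1 := one_sided L hL f f' hdiff hconvf hlip p w
  have h2 := one_sided L hL f f' hdiff hconvf hlip w p
  have hsym : (f' w - f' p) ⬝ᵥ (f' w - f' p) = (f' p - f' w) ⬝ᵥ (f' p - f' w) := by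
    have he : f' w - f' p = -(f' p - f' w) := by abel
    rw [he, neg_dotProduct, dotProduct_neg, neg_neg]
  rw [hsym] at h2
  set Y : ℝ := (f' p - f' w) ⬝ᵥ (f' p - f' w) with hY
  have hexp : (f' p - f' w) ⬝ᵥ (p - w)
      = (f' p ⬝ᵥ p - f' p ⬝ᵥ w) - (f' w ⬝ᵥ p - f' w ⬝ᵥ w) := by
    rw [sub_dotProduct, dotProduct_sub, dotProduct_sub]
  have hL' : L ≠ 0 := ne_of_gt hL
  rw [hexp]
  have hsum : 1 / (2 * L) * Y + 1 / (2 * L) * Y ≤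
      (f' p ⬝ᵥ p - f' p ⬝ᵥ w) - (f' w ⬝ᵥ p - f' w ⬝ᵥ w) := by linarith
  have : 1 / (2 * L) * Y + 1 / (2 * L) * Y = Y / L := by field_simp; ring
  rw [this] at hsum
  rw [div_le_iff₀ hL] at hsum
  linarith
section MatrixHelpers
open Matrix
variable {N : ℕ}

lemma quad_one (c : ℝ) (v : Fin N → ℝ) :
    v ⬝ᵥ ((c • (1 : Matrix (Fin N) (Fin N) ℝ)) *ᵥ v) = c * (v ⬝ᵥ v) := by
  rw [smul_mulVec, one_mulVec, dotProduct_smul, smul_eq_mul]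

lemma vecMulVec_mulVec' (u w v : Fin N → ℝ) : vecMulVec u w *ᵥ v = (w ⬝ᵥ v) • u := by
  funext i
  simp only [Matrix.mulVec, Matrix.vecMulVec_apply, dotProduct, Pi.smul_apply,
    smul_eq_mul]
  rw [Finset.sum_mul]
  exact Finset.sum_congr rfl fun j _ => by ring

lemma quad_vecMulVec (u v : Fin N → ℝ) :
    v ⬝ᵥ (vecMulVec u u *ᵥ v) = (u ⬝ᵥ v) ^ 2 := by
  rw [vecMulVec_mulVec', dotProduct_smul, smul_eq_mul, dotProduct_comm v u, sq]

lemma isHermitian_vecMulVec_self (u : Fin N → ℝ) : (vecMulVec u u).IsHermitian := by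
  unfold Matrix.IsHermitian
  ext i j
  simp [Matrix.conjTranspose_apply, Matrix.vecMulVec_apply, mul_comm]

lemma isHermitian_smul' (c : ℝ) {A : Matrix (Fin N) (Fin N) ℝ} (h : A.IsHermitian) :
    (c • A).IsHermitian := by
  unfold Matrix.IsHermitian at *
  rw [Matrix.conjTranspose_smul, h]
  congr 1

end MatrixHelpers
section MoreHelpers
open Matrix
variable {N : ℕ}
lemma quad_smul_vvm (c : ℝ) (u v : Fin N → ℝ) :
    v ⬝ᵥ ((c • vecMulVec u u) *ᵥ v) = c * (u ⬝ᵥ v) ^ 2 := by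
  rw [smul_mulVec, dotProduct_smul, smul_eq_mul, quad_vecMulVec]
end MoreHelpers

lemma core_lower (γ L σ Y n α β P W uv : ℝ)
    (hγ : 0 < γ) (hL : 0 < L) (hσ : 0 < σ) (hY : 0 < Y)
    (hYL : Y ≤ L * σ) (hn : 0 ≤ n) (hP : 0 ≤ P)
    (hW2 : W ^ 2 ≤ P * Y)
    (hPdef : P = n - 2 * (σ⁻¹ * α) * β + (σ⁻¹ * α) ^ 2 * Y)
    (hWdef : W = β - (σ⁻¹ * α) * Y)
    (huv : uv = α - γ * (σ / Y) / (1 + γ) * β) :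
    γ / (1 + γ) / L * n ≤
      γ * (σ / Y) * n + σ⁻¹ * (1 + γ) * uv ^ 2
        - σ⁻¹ * γ ^ 2 * (σ / Y) ^ 2 / (1 + γ) * β ^ 2 := by
  have h1γ : (0:ℝ) < 1 + γ := by linarith
  have idq : γ * (σ / Y) * n + σ⁻¹ * (1 + γ) * uv ^ 2
      - σ⁻¹ * γ ^ 2 * (σ / Y) ^ 2 / (1 + γ) * β ^ 2
      = γ * (σ / Y) * P + σ⁻¹ * α ^ 2 := by
    rw [huv, hPdef]
    field_simp
    ring
  have poly : 0 ≤ γ ^ 2 * σ ^ 2 * P + α ^ 2 * Y - 2 * γ * σ * α * W := by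
    have h1 : 0 ≤ Y * (γ ^ 2 * σ ^ 2 * P + α ^ 2 * Y - 2 * γ * σ * α * W) := by
      nlinarith [sq_nonneg (γ * σ * W - α * Y),
        mul_nonneg (mul_nonneg (sq_nonneg γ) (sq_nonneg σ)) (sub_nonneg.2 hW2)]
    exact (mul_nonneg_iff_of_pos_left hY).mp h1
  have hD : (1 + γ) * (γ * (σ / Y) * P + σ⁻¹ * α ^ 2) - γ * (σ / Y) * n
      = (γ ^ 2 * σ ^ 2 * P + α ^ 2 * Y - 2 * γ * σ * α * W) / (σ * Y) := by
    rw [hWdef, hPdef]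
    field_simp
    ring
  have hDpos : 0 ≤ (1 + γ) * (γ * (σ / Y) * P + σ⁻¹ * α ^ 2) - γ * (σ / Y) * n := by
    rw [hD]
    exact div_nonneg poly (by positivity)
  have key : γ * (σ / Y) / (1 + γ) * n ≤ γ * (σ / Y) * P + σ⁻¹ * α ^ 2 := by
    rw [div_mul_eq_mul_div, div_le_iff₀ h1γ]
    linarith [hDpos]
  have hτ1 : (1:ℝ) / L ≤ σ / Y := by
    rw [div_le_div_iff₀ hL hY]
    nlinarith
  have hcoef : γ / (1 + γ) / L ≤ γ * (σ / Y) / (1 + γ) := by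
    have h0 : (0:ℝ) ≤ γ / (1 + γ) := by positivity
    calc γ / (1 + γ) / L = γ / (1 + γ) * (1 / L) := by ring
      _ ≤ γ / (1 + γ) * (σ / Y) := mul_le_mul_of_nonneg_left hτ1 h0
      _ = γ * (σ / Y) / (1 + γ) := by ring
  calc γ / (1 + γ) / L * n ≤ γ * (σ / Y) / (1 + γ) * n :=
        mul_le_mul_of_nonneg_right hcoef hn
    _ ≤ γ * (σ / Y) * P + σ⁻¹ * α ^ 2 := key
    _ = _ := idq.symm

lemma core_upper (γ μ L σ S Y n β uv U : ℝ)
    (hμ : 0 < μ) (hμL : μ ≤ L) (hγ : 0 < γ) (hσ : 0 < σ) (hY : 0 < Y)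
    (hμS : μ * S ≤ σ) (hYL : Y ≤ L * σ) (hn : 0 ≤ n)
    (hUdef : U = S - 2 * (γ * (σ / Y) / (1 + γ)) * σ + (γ * (σ / Y) / (1 + γ)) ^ 2 * Y)
    (huv2 : uv ^ 2 ≤ U * n) :
    γ * (σ / Y) * n + σ⁻¹ * (1 + γ) * uv ^ 2
      - σ⁻¹ * γ ^ 2 * (σ / Y) ^ 2 / (1 + γ) * β ^ 2
      ≤ ((1 + 2 * γ) / μ - (2 + γ) * γ / (1 + γ) / L) * n := by
  have hL : 0 < L := lt_of_lt_of_le hμ hμL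
  have h1γ : (0:ℝ) < 1 + γ := by linarith
  have idU : γ * (σ / Y) + σ⁻¹ * (1 + γ) * U
      = (1 + γ) * S / σ - γ * (σ / Y) / (1 + γ) := by
    rw [hUdef]
    field_simp
    ring
  have h1 : (1 + γ) * S / σ ≤ (1 + γ) / μ := by
    rw [div_le_div_iff₀ hσ hμ]
    nlinarith
  have hτ1 : (1:ℝ) / L ≤ σ / Y := by
    rw [div_le_div_iff₀ hL hY]
    nlinarith
  have h2 : γ / (1 + γ) / L ≤ γ * (σ / Y) / (1 + γ) := by
    have h0 : (0:ℝ) ≤ γ / (1 + γ) := by positivity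
    calc γ / (1 + γ) / L = γ / (1 + γ) * (1 / L) := by ring
      _ ≤ γ / (1 + γ) * (σ / Y) := mul_le_mul_of_nonneg_left hτ1 h0
      _ = γ * (σ / Y) / (1 + γ) := by ring
  have h3 : (1 + γ) / μ - γ / (1 + γ) / L
      ≤ (1 + 2 * γ) / μ - (2 + γ) * γ / (1 + γ) / L := by
    have hγμL : γ / L ≤ γ / μ := by
      rw [div_le_div_iff₀ hL hμ]; nlinarith
    have e1 : (2 + γ) * γ / (1 + γ) / L - γ / (1 + γ) / L = γ / L := by
      field_simp
      ring
    have e2 : (1 + 2 * γ) / μ - (1 + γ) / μ = γ / μ := by ring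
    linarith
  have hcoefb : γ * (σ / Y) + σ⁻¹ * (1 + γ) * U
      ≤ (1 + 2 * γ) / μ - (2 + γ) * γ / (1 + γ) / L := by
    rw [idU]; linarith
  have step1 : σ⁻¹ * (1 + γ) * uv ^ 2 ≤ σ⁻¹ * (1 + γ) * (U * n) :=
    mul_le_mul_of_nonneg_left huv2 (by positivity)
  have step2 : 0 ≤ σ⁻¹ * γ ^ 2 * (σ / Y) ^ 2 / (1 + γ) * β ^ 2 := by positivity
  have step4 := mul_le_mul_of_nonneg_right hcoefb hn
  nlinarith [step1, step2, step4]

/-- Eigenvalue bounds for the zero-memory BFGS inverse-Hessian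
approximation `H = γτ·Id + ρ(1+γ) u_γ u_γᵀ - ργ²τ²/(1+γ) y yᵀ` with `ρ = 1/⟨s,y⟩`,
`τ = ⟨s,y⟩/‖y‖²`, `u_γ = s - (γτ/(1+γ)) y`: `a·Id ⪯ H ⪯ b·Id` with
`a = (γ/(1+γ))/L > 0` and `b = (1+2γ)/μ - ((2+γ)γ/(1+γ))/L`. -/
theorem stmt_12 {N : ℕ} (μ L γ : ℝ) (hμ : 0 < μ) (hμL : μ ≤ L) (hγ : 0 < γ)
    (f : (Fin N → ℝ) → ℝ) (f' : (Fin N → ℝ) → Fin N → ℝ)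
    (hdiff : ∀ z : Fin N → ℝ, HasFDerivAt f (dotCLM (f' z)) z)
    (hsc : ConvexOn ℝ Set.univ fun z => f z - μ / 2 * (z ⬝ᵥ z))
    (hlip : ∀ z w : Fin N → ℝ, euNorm (f' z - f' w) ≤ L * euNorm (z - w))
    (x x' : Fin N → ℝ) (hne : x ≠ x')
    (s y : Fin N → ℝ) (hs : s = x - x') (hy : y = f' x - f' x')
    (ρ τ : ℝ) (hρ : ρ = (s ⬝ᵥ y)⁻¹) (hτ : τ = (s ⬝ᵥ y) / (y ⬝ᵥ y))
    (uγ : Fin N → ℝ) (huγ : uγ = s - (γ * τ / (1 + γ)) • y)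
    (H : Matrix (Fin N) (Fin N) ℝ)
    (hH : H = (γ * τ) • (1 : Matrix (Fin N) (Fin N) ℝ)
        + (ρ * (1 + γ)) • vecMulVec uγ uγ
        - (ρ * γ ^ 2 * τ ^ 2 / (1 + γ)) • vecMulVec y y)
    (a b : ℝ) (ha : a = γ / (1 + γ) / L)
    (hb : b = (1 + 2 * γ) / μ - (2 + γ) * γ / (1 + γ) / L) :
    (H - a • (1 : Matrix (Fin N) (Fin N) ℝ)).PosSemidef ∧
    (b • (1 : Matrix (Fin N) (Fin N) ℝ) - H).PosSemidef := by
  have hL : 0 < L := lt_of_lt_of_le hμ hμL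
  have h1γ : (0:ℝ) < 1 + γ := by linarith
  -- strong convexity ⇒ μ‖s‖² ≤ ⟨s,y⟩
  have hgradμ : ∀ z, HasFDerivAt (fun z : Fin N → ℝ => f z - μ / 2 * (z ⬝ᵥ z))
      (dotCLM (f' z - μ • z)) z := by
    intro z
    have h := (hdiff z).sub ((hasFDerivAt_dot_self z).const_mul (μ / 2))
    have he : dotCLM (f' z - μ • z)
        = dotCLM (f' z) - (μ / 2) • dotCLM ((2:ℝ) • z) := by
      ext v
      simp [dotCLM_apply, sub_dotProduct, smul_dotProduct, smul_eq_mul]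
      ring
    rw [he]
    exact h
  have hmono := grad_mono _ _ hgradμ hsc x' x
  have heμ : (f' x - μ • x) - (f' x' - μ • x') = y - μ • s := by
    rw [hy, hs]; ext i; simp; ring
  rw [heμ, ← hs] at hmono
  rw [sub_dotProduct, smul_dotProduct, smul_eq_mul] at hmono
  have hys : y ⬝ᵥ s = s ⬝ᵥ y := dotProduct_comm _ _
  have hF1 : μ * (s ⬝ᵥ s) ≤ s ⬝ᵥ y := by rw [← hys]; linarith
  -- convexity of f
  have hq2 : ConvexOn ℝ Set.univ (fun z : Fin N → ℝ => μ / 2 * (z ⬝ᵥ z)) := by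
    have h := convexOn_dot_self (N := N).smul (le_of_lt (by positivity : (0:ℝ) < μ / 2))
    simpa [smul_eq_mul] using h
  have hconvf : ConvexOn ℝ Set.univ f := by
    have h := hsc.add hq2
    have he : ((fun z : Fin N → ℝ => f z - μ / 2 * (z ⬝ᵥ z))
        + fun z : Fin N → ℝ => μ / 2 * (z ⬝ᵥ z)) = f := by
      funext z; simp
    rwa [he] at h
  -- co-coercivity ⇒ ‖y‖² ≤ L⟨s,y⟩
  have hcoco := cocoercive L hL f f' hdiff hconvf hlip x x'
  rw [← hy, ← hs] at hcoco
  have hF2 : y ⬝ᵥ y ≤ L * (s ⬝ᵥ y) := by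
    rw [dotProduct_comm y s] at hcoco
    exact hcoco
  -- scalar positivity facts
  have hsne : s ≠ 0 := by rw [hs]; exact sub_ne_zero.mpr hne
  have hS : 0 < s ⬝ᵥ s :=
    lt_of_le_of_ne (dot_self_nonneg s) (Ne.symm fun h => hsne (dotProduct_self_eq_zero.mp h))
  have hσ : 0 < s ⬝ᵥ y := lt_of_lt_of_le (mul_pos hμ hS) hF1
  have hcs2 : (s ⬝ᵥ y) ^ 2 ≤ (s ⬝ᵥ s) * (y ⬝ᵥ y) := cs_sq s y
  have hY : 0 < y ⬝ᵥ y := by nlinarith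
  -- expansions
  constructor
  · refine Matrix.PosSemidef.of_dotProduct_mulVec_nonneg ?_ ?_
    · rw [hH]
      exact (((isHermitian_smul' (γ * τ) Matrix.isHermitian_one).add
        (isHermitian_smul' (ρ * (1 + γ)) (isHermitian_vecMulVec_self uγ))).sub
        (isHermitian_smul' (ρ * γ ^ 2 * τ ^ 2 / (1 + γ)) (isHermitian_vecMulVec_self y))).sub
        (isHermitian_smul' a Matrix.isHermitian_one)
    · intro v
      have hst : star v = v := rfl
      rw [hst, hH]
      rw [Matrix.sub_mulVec, Matrix.sub_mulVec, Matrix.add_mulVec,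
        dotProduct_sub, dotProduct_sub, dotProduct_add,
        quad_one, quad_one, quad_smul_vvm, quad_smul_vvm]
      set c : ℝ := (s ⬝ᵥ y)⁻¹ * (s ⬝ᵥ v) with hc
      set w : Fin N → ℝ := v - c • y with hw
      have hPd : w ⬝ᵥ w = v ⬝ᵥ v - 2 * c * (y ⬝ᵥ v) + c ^ 2 * (y ⬝ᵥ y) := by
        rw [hw]
        simp only [sub_dotProduct, dotProduct_sub, dotProduct_smul, smul_dotProduct,
          smul_eq_mul]
        rw [dotProduct_comm v y]
        ring
      have hWd : w ⬝ᵥ y = (y ⬝ᵥ v) - c * (y ⬝ᵥ y) := by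
        rw [hw]
        simp only [sub_dotProduct, smul_dotProduct, smul_eq_mul]
        rw [dotProduct_comm v y]
      have huvd : uγ ⬝ᵥ v = (s ⬝ᵥ v) - γ * ((s ⬝ᵥ y) / (y ⬝ᵥ y)) / (1 + γ) * (y ⬝ᵥ v) := by
        rw [huγ, hτ]
        simp only [sub_dotProduct, smul_dotProduct, smul_eq_mul]
      have hcore := core_lower γ L (s ⬝ᵥ y) (y ⬝ᵥ y) (v ⬝ᵥ v) (s ⬝ᵥ v) (y ⬝ᵥ v)
        (w ⬝ᵥ w) (w ⬝ᵥ y) (uγ ⬝ᵥ v) hγ hL hσ hY hF2 (dot_self_nonneg v)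
        (dot_self_nonneg w) (cs_sq w y) (by rw [hPd, hc]) (by rw [hWd, hc]) huvd
      rw [ha, hρ, hτ]
      linarith [hcore]
  · refine Matrix.PosSemidef.of_dotProduct_mulVec_nonneg ?_ ?_
    · rw [hH]
      exact (isHermitian_smul' b Matrix.isHermitian_one).sub
        ((((isHermitian_smul' (γ * τ) Matrix.isHermitian_one).add
        (isHermitian_smul' (ρ * (1 + γ)) (isHermitian_vecMulVec_self uγ))).sub
        (isHermitian_smul' (ρ * γ ^ 2 * τ ^ 2 / (1 + γ)) (isHermitian_vecMulVec_self y))))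
    · intro v
      have hst : star v = v := rfl
      rw [hst, hH]
      rw [Matrix.sub_mulVec, Matrix.sub_mulVec, Matrix.add_mulVec,
        dotProduct_sub, dotProduct_sub, dotProduct_add,
        quad_one, quad_one, quad_smul_vvm, quad_smul_vvm]
      have hUd : uγ ⬝ᵥ uγ = (s ⬝ᵥ s)
          - 2 * (γ * ((s ⬝ᵥ y) / (y ⬝ᵥ y)) / (1 + γ)) * (s ⬝ᵥ y)
          + (γ * ((s ⬝ᵥ y) / (y ⬝ᵥ y)) / (1 + γ)) ^ 2 * (y ⬝ᵥ y) := by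
        rw [huγ, hτ]
        simp only [sub_dotProduct, dotProduct_sub, smul_dotProduct, dotProduct_smul,
          smul_eq_mul]
        rw [dotProduct_comm y s]
        ring
      have huv2 : (uγ ⬝ᵥ v) ^ 2 ≤ (uγ ⬝ᵥ uγ) * (v ⬝ᵥ v) := cs_sq uγ v
      have hcore := core_upper γ μ L (s ⬝ᵥ y) (s ⬝ᵥ s) (y ⬝ᵥ y) (v ⬝ᵥ v) (y ⬝ᵥ v)
        (uγ ⬝ᵥ v) (uγ ⬝ᵥ uγ) hμ hμL hγ hσ hY hF1 hF2 (dot_self_nonneg v) hUd huv2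
      rw [hb, hρ, hτ]
      linarith [hcore]
end Coco
end
end

section
/- (Toland duality.) Let h ∈ Γ₀(ℝ^N) and let g : ℝ^N → ℝ be convex (finite-valued, hence continuous). Then inf_{x ∈ ℝ^N} ( h(x) − g(x) ) = inf_{u ∈ ℝ^N} ( g*(u) − h*(u) ), where both infima are taken in ℝ ∪ {±∞} and on the dual side the convention (+∞) − (+∞) = +∞ is used (note h*(u) > −∞ for all u since h is proper). -/
open Matrix

noncomputable section

open scoped Classical

/-- Fenchel conjugate `h*(v) = sup_x ⟨v,x⟩ - h(x)` of an extended-real-valued function. -/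
def fconj {N : ℕ} (h : (Fin N → ℝ) → EReal) (v : Fin N → ℝ) : EReal :=
  ⨆ x : Fin N → ℝ, ((v ⬝ᵥ x : ℝ) : EReal) - h x

/-- Fenchel conjugate of a real-valued function. -/
def fconjR {N : ℕ} (g : (Fin N → ℝ) → ℝ) (v : Fin N → ℝ) : EReal :=
  ⨆ x : Fin N → ℝ, ((v ⬝ᵥ x - g x : ℝ) : EReal)

/- ### Auxiliary lemmas -/

lemma ereal_le_coe_of_forall_add {a : EReal} {r : ℝ}
    (H : ∀ ε : ℝ, 0 < ε → a ≤ ((r + ε : ℝ) : EReal)) : a ≤ (r : EReal) := by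
  rcases eq_or_ne a ⊥ with rfl | hb
  · exact bot_le
  have ht : a ≠ ⊤ := by
    intro hT
    exact ((not_le.mpr (EReal.coe_lt_top (r + 1))) (hT ▸ H 1 one_pos)).elim
  lift a to ℝ using ⟨ht, hb⟩
  rw [EReal.coe_le_coe_iff]
  by_contra hlt
  push_neg at hlt
  have := (EReal.coe_le_coe_iff).mp (H ((a - r)/2) (by linarith))
  linarith

lemma eps_subgrad {N : ℕ} {g : (Fin N → ℝ) → ℝ} (hg : ConvexOn ℝ Set.univ g)
    (x : Fin N → ℝ) {ε : ℝ} (hε : 0 < ε) :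
    ∃ u : Fin N → ℝ, ∀ y, u ⬝ᵥ y - g y ≤ u ⬝ᵥ x - g x + ε := by
  have hgc : Continuous g := by
    have := hg.continuousOn isOpen_univ
    rwa [← continuousOn_univ]
  set t : Set ((Fin N → ℝ) × ℝ) := {p | g p.1 ≤ p.2} with ht
  have htc : Convex ℝ t := by
    intro p hp q hq a b ha hb hab
    simp only [ht, Set.mem_setOf_eq] at *
    calc g (a • p + b • q).1 = g (a • p.1 + b • q.1) := rfl
      _ ≤ a * g p.1 + b * g q.1 := hg.2 (Set.mem_univ _) (Set.mem_univ _) ha hb hab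
      _ ≤ a * p.2 + b * q.2 := by gcongr
  have htcl : IsClosed t := isClosed_le (hgc.comp continuous_fst) continuous_snd
  have hpt : (x, g x - ε) ∉ t := by
    simp only [ht, Set.mem_setOf_eq]
    linarith
  obtain ⟨f, c, hfc, hsep⟩ := geometric_hahn_banach_point_closed htc htcl hpt
  set s : ℝ := f (0, 1) with hs
  have hdec : ∀ y : Fin N → ℝ, ∀ r : ℝ, f (y, r) = f (y, 0) + r * s := by
    intro y r
    have : (y, r) = (y, (0:ℝ)) + r • ((0 : Fin N → ℝ), (1:ℝ)) := by
      simp [Prod.ext_iff]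
    rw [this, map_add, f.map_smul, smul_eq_mul, hs]
  have hspos : 0 < s := by
    have h1 : c < f (x, g x) := hsep (x, g x) (by simp [ht])
    have h2 := hfc
    rw [hdec x (g x)] at h1
    rw [hdec x (g x - ε)] at h2
    nlinarith
  set u : Fin N → ℝ := fun i => -(f ((fun j => if i = j then 1 else 0), 0)) / s with hu
  have hrep : ∀ y : Fin N → ℝ, f (y, 0) = -s * (u ⬝ᵥ y) := by
    intro y
    have hF : f (y, 0) =
        ∑ i, y i • f ((fun j => if i = j then 1 else 0), 0) := by
      have := LinearMap.pi_apply_eq_sum_univ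
        ((f.toLinearMap).comp (LinearMap.inl ℝ (Fin N → ℝ) ℝ)) y
      simpa using this
    rw [hF, dotProduct, Finset.mul_sum]
    apply Finset.sum_congr rfl
    intro i _
    simp only [hu, smul_eq_mul]
    field_simp
  refine ⟨u, fun y => ?_⟩
  have h1 : c < f (y, g y) := hsep (y, g y) (by simp [ht])
  have h2 := hfc
  rw [hdec y (g y), hrep y] at h1
  rw [hdec x (g x - ε), hrep x] at h2
  have key : -s * (u ⬝ᵥ x) + (g x - ε) * s < -s * (u ⬝ᵥ y) + g y * s := h2.trans h1
  nlinarith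

lemma fconjR_ge {N : ℕ} {g : (Fin N → ℝ) → ℝ} {u y : Fin N → ℝ} :
    ((u ⬝ᵥ y - g y : ℝ) : EReal) ≤ fconjR g u :=
  le_iSup (fun y => ((u ⬝ᵥ y - g y : ℝ) : EReal)) y

lemma fconj_ge {N : ℕ} {h : (Fin N → ℝ) → EReal} {u y : Fin N → ℝ} :
    ((u ⬝ᵥ y : ℝ) : EReal) - h y ≤ fconj h u :=
  le_iSup (fun y => ((u ⬝ᵥ y : ℝ) : EReal) - h y) y

lemma fconj_lt {N : ℕ} {h : (Fin N → ℝ) → EReal} {u : Fin N → ℝ} {b : EReal}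
    (hb : b < fconj h u) : ∃ x, b < ((u ⬝ᵥ x : ℝ) : EReal) - h x := by
  unfold fconj at hb; exact lt_iSup_iff.mp hb

/-- (Toland duality.) For `h ∈ Γ₀(ℝ^N)` and `g : ℝ^N → ℝ` convex
(finite-valued): `inf_x (h(x) - g(x)) = inf_u (g*(u) - h*(u))`, where on the dual side
the convention `(+∞) - (+∞) = +∞` is used (note `h*(u) > -∞` always, as `h` is proper). -/
theorem stmt_16 {N : ℕ} (h : (Fin N → ℝ) → EReal) (hh : Gamma0 h)
    (g : (Fin N → ℝ) → ℝ) (hg : ConvexOn ℝ Set.univ g) :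
    (⨅ x : Fin N → ℝ, h x - ((g x : ℝ) : EReal)) =
      ⨅ u : Fin N → ℝ,
        if fconjR g u = ⊤ ∧ fconj h u = ⊤ then (⊤ : EReal)
        else fconjR g u - fconj h u := by
  obtain ⟨⟨z0, hz0⟩, hbot, _, _⟩ := hh
  have hBbot : ∀ u : Fin N → ℝ, fconj h u ≠ ⊥ := by
    intro u hB
    have hle : ((u ⬝ᵥ z0 : ℝ) : EReal) - h z0 ≤ fconj h u := fconj_ge
    rw [hB, le_bot_iff] at hle
    lift h z0 to ℝ using ⟨hz0, hbot z0⟩ with r0 hr0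
    rw [← EReal.coe_sub] at hle
    exact EReal.coe_ne_bot _ hle
  have hAbot : ∀ u : Fin N → ℝ, fconjR g u ≠ ⊥ := by
    intro u hA
    have hle : ((u ⬝ᵥ (0 : Fin N → ℝ) - g 0 : ℝ) : EReal) ≤ fconjR g u := fconjR_ge
    rw [hA, le_bot_iff] at hle
    exact EReal.coe_ne_bot _ hle
  apply le_antisymm
  · -- primal ≤ dual
    apply le_iInf; intro u
    by_cases hc : fconjR g u = ⊤ ∧ fconj h u = ⊤
    · rw [if_pos hc]; exact le_top
    rw [if_neg hc]
    by_cases hA : fconjR g u = ⊤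
    · have hBt : fconj h u ≠ ⊤ := fun hB => hc ⟨hA, hB⟩
      lift fconj h u to ℝ using ⟨hBt, hBbot u⟩ with rb hrb
      rw [hA, EReal.top_sub_coe]; exact le_top
    · have hAle : ∀ y, u ⬝ᵥ y - g y ≤ u ⬝ᵥ y - g y := fun _ => le_rfl
      lift fconjR g u to ℝ using ⟨hA, hAbot u⟩ with ra hra
      have hAub : ∀ y, u ⬝ᵥ y - g y ≤ ra := by
        intro y
        have h1 : ((u ⬝ᵥ y - g y : ℝ) : EReal) ≤ fconjR g u := fconjR_ge
        rw [← hra] at h1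
        exact EReal.coe_le_coe_iff.mp h1
      rcases eq_or_ne (fconj h u) ⊤ with hB | hB
      · rw [hB, EReal.sub_top, le_bot_iff, iInf_eq_bot]
        intro b hb
        rcases eq_or_ne b ⊤ with rfl | hbt
        · refine ⟨z0, ?_⟩
          lift h z0 to ℝ using ⟨hz0, hbot z0⟩ with r0 hr0
          rw [← EReal.coe_sub]
          exact EReal.coe_lt_top _
        · lift b to ℝ using ⟨hbt, hb.ne'⟩ with rb hrbb
          have hlt : ((ra - rb : ℝ) : EReal) < fconj h u := hB ▸ EReal.coe_lt_top _
          obtain ⟨x, hx⟩ := fconj_lt hlt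
          have hxt : h x ≠ ⊤ := by
            intro hT
            rw [hT, EReal.sub_top] at hx
            exact absurd hx not_lt_bot
          lift h x to ℝ using ⟨hxt, hbot x⟩ with rh hrh
          rw [← EReal.coe_sub, EReal.coe_lt_coe_iff] at hx
          refine ⟨x, ?_⟩
          rw [← hrh, ← EReal.coe_sub, EReal.coe_lt_coe_iff]
          have := hAub x
          linarith
      · lift fconj h u to ℝ using ⟨hB, hBbot u⟩ with rb hrb
        rw [← EReal.coe_sub]
        apply ereal_le_coe_of_forall_add
        intro ε hε
        have hlt : ((rb - ε : ℝ) : EReal) < fconj h u := by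
          rw [← hrb, EReal.coe_lt_coe_iff]; linarith
        obtain ⟨x, hx⟩ := fconj_lt hlt
        have hxt : h x ≠ ⊤ := by
          intro hT
          rw [hT, EReal.sub_top] at hx
          exact absurd hx not_lt_bot
        lift h x to ℝ using ⟨hxt, hbot x⟩ with rh hrh
        rw [← EReal.coe_sub, EReal.coe_lt_coe_iff] at hx
        refine iInf_le_of_le x ?_
        rw [← hrh, ← EReal.coe_sub, EReal.coe_le_coe_iff]
        have := hAub x
        linarith
  · -- dual ≤ primal
    apply le_iInf; intro x
    rcases eq_or_ne (h x) ⊤ with hx | hx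
    · rw [hx, EReal.top_sub_coe]; exact le_top
    lift h x to ℝ using ⟨hx, hbot x⟩ with rh hrh
    rw [← EReal.coe_sub]
    apply ereal_le_coe_of_forall_add
    intro ε hε
    obtain ⟨u, hu⟩ := eps_subgrad hg x hε
    have hAub : fconjR g u ≤ ((u ⬝ᵥ x - g x + ε : ℝ) : EReal) := by
      unfold fconjR
      exact iSup_le fun y => EReal.coe_le_coe_iff.mpr (hu y)
    have hAlb : ((u ⬝ᵥ x - g x : ℝ) : EReal) ≤ fconjR g u := fconjR_ge
    have hAt : fconjR g u ≠ ⊤ := fun hT => by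
      rw [hT] at hAub
      exact absurd hAub (not_le.mpr (EReal.coe_lt_top _)).elim
    lift fconjR g u to ℝ using ⟨hAt, hAbot u⟩ with ra hra
    have hra1 : ra ≤ u ⬝ᵥ x - g x + ε := EReal.coe_le_coe_iff.mp hAub
    rcases eq_or_ne (fconj h u) ⊤ with hB | hB
    · refine iInf_le_of_le u ?_
      have hcond : ¬(fconjR g u = ⊤ ∧ fconj h u = ⊤) := by
        intro ⟨h1, _⟩
        rw [← hra] at h1
        exact EReal.coe_ne_top ra h1
      rw [if_neg hcond, hB, EReal.sub_top]
      exact bot_le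
    · lift fconj h u to ℝ using ⟨hB, hBbot u⟩ with rb hrb
      have hBlb : u ⬝ᵥ x - rh ≤ rb := by
        have h1 : ((u ⬝ᵥ x : ℝ) : EReal) - h x ≤ fconj h u := fconj_ge
        rw [← hrh, ← hrb, ← EReal.coe_sub, EReal.coe_le_coe_iff] at h1
        exact h1
      refine iInf_le_of_le u ?_
      have hcond : ¬(fconjR g u = ⊤ ∧ fconj h u = ⊤) := by
        intro ⟨h1, _⟩
        rw [← hra] at h1
        exact EReal.coe_ne_top ra h1
      rw [if_neg hcond, ← hra, ← hrb, ← EReal.coe_sub, EReal.coe_le_coe_iff]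
      linarith
end
end

section
/- Let D be a diagonal N×N matrix with strictly positive diagonal entries, u ∈ ℝ^N, and assume V = D + u u^T (respectively V = D − u u^T) is symmetric positive definite. Let A be an M×N real matrix and b ∈ ℝ^M with {x : A x = b} nonempty, and let h be the indicator function of {x : A x = b}. Set Y = A D^{-1/2}, let Π be the orthogonal projector onto Ker(Y), and c = Y⁺ b, where Y⁺ is the Moore–Penrose pseudo-inverse. Then: (i) for every z ∈ ℝ^N, prox_{h∘D^{-1/2}}(z) = Π z + c; and (ii) for every x ∈ ℝ^N, the unique root of the function L(α) = ⟨u, x − D^{-1/2}( prox_{h∘D^{-1/2}}( D^{1/2}( x ∓ α D^{-1} u ) ) )⟩ + α (sign − for V = D + u u^T, sign + for V = D − u u^T) is α* = ⟨u, D^{-1/2}( c − (Id − Π) D^{1/2} x )⟩ / ( 1 ± ⟨u, D^{-1/2} Π D^{-1/2} u⟩ ) (sign + in the denominator for V = D + u u^T, sign − for V = D − u u^T). -/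
open Matrix

noncomputable section

/-- `Ap` is the Moore–Penrose pseudo-inverse of `A` (Penrose equations). -/
def IsMoorePenrose {m n : ℕ} (A : Matrix (Fin m) (Fin n) ℝ)
    (Ap : Matrix (Fin n) (Fin m) ℝ) : Prop :=
  A * Ap * A = A ∧ Ap * A * Ap = Ap ∧ (A * Ap)ᵀ = A * Ap ∧ (Ap * A)ᵀ = Ap * A

/-- Symmetric matrices can be moved across the dot product. -/
private lemma symmDot {N : ℕ} {M : Matrix (Fin N) (Fin N) ℝ} (hM : Mᵀ = M)
    (a b : Fin N → ℝ) : (M *ᵥ a) ⬝ᵥ b = a ⬝ᵥ (M *ᵥ b) := by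
  rw [dotProduct_mulVec, ← mulVec_transpose, hM]

private lemma selfDotNonneg {N : ℕ} (v : Fin N → ℝ) : 0 ≤ v ⬝ᵥ v :=
  Finset.sum_nonneg fun i _ => mul_self_nonneg (v i)

private lemma dotExpand {N : ℕ} (a b : Fin N → ℝ) :
    (a - b) ⬝ᵥ (a - b) = a ⬝ᵥ a - 2 * (a ⬝ᵥ b) + b ⬝ᵥ b := by
  rw [sub_dotProduct, dotProduct_sub, dotProduct_sub, dotProduct_comm b a]
  ring

private lemma vvMulVec {N : ℕ} (u t : Fin N → ℝ) :
    vecMulVec u u *ᵥ t = (u ⬝ᵥ t) • u := by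
  funext i
  simp only [vecMulVec, mulVec, dotProduct, of_apply, Pi.smul_apply, smul_eq_mul,
    Finset.sum_mul]
  exact Finset.sum_congr rfl fun j _ => by ring

/-- Affine-constraint example: for `V = D ± u uᵀ` SPD (`ε = 1` for `+`,
`ε = -1` for `-`), `h` the indicator of `{x : A x = b}` (nonempty), `Y = A D^{-1/2}`,
`Pr` the orthogonal projector onto `Ker Y`, `c = Y⁺ b`:
(i) `prox_{h∘D^{-1/2}}(z) = Pr z + c` for every `z`; and (ii) the unique root of
`L(α) = ⟨u, x - D^{-1/2}(prox_{h∘D^{-1/2}}(D^{1/2}(x ∓ α D⁻¹ u)))⟩ + α` is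
`α* = ⟨u, D^{-1/2}(c - (Id - Pr) D^{1/2} x)⟩ / (1 ± ⟨u, D^{-1/2} Pr D^{-1/2} u⟩)`. -/
theorem stmt_18 {N M : ℕ}
    (d : Fin N → ℝ) (hd : ∀ i, 0 < d i)
    (u : Fin N → ℝ)
    (ε : ℝ) (hε : ε = 1 ∨ ε = -1)
    (V : Matrix (Fin N) (Fin N) ℝ)
    (hV : V = Matrix.diagonal d + ε • vecMulVec u u) (hVpd : V.PosDef)
    (A : Matrix (Fin M) (Fin N) ℝ) (b : Fin M → ℝ) (hfeas : ∃ z, A *ᵥ z = b)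
    (h : (Fin N → ℝ) → EReal)
    (hind : ∀ z : Fin N → ℝ, (A *ᵥ z = b → h z = 0) ∧ (A *ᵥ z ≠ b → h z = ⊤))
    (Y : Matrix (Fin M) (Fin N) ℝ)
    (hY : Y = A * Matrix.diagonal fun i => (Real.sqrt (d i))⁻¹)
    (Pr : Matrix (Fin N) (Fin N) ℝ)
    (hPr₁ : Prᵀ = Pr) (hPr₂ : Pr * Pr = Pr)
    (hPr₃ : ∀ v : Fin N → ℝ, Y *ᵥ (Pr *ᵥ v) = 0)
    (hPr₄ : ∀ v : Fin N → ℝ, Y *ᵥ v = 0 → Pr *ᵥ v = v)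
    (Yp : Matrix (Fin N) (Fin M) ℝ) (hYp : IsMoorePenrose Y Yp)
    (c : Fin N → ℝ) (hc : c = Yp *ᵥ b)
    (proxg : (Fin N → ℝ) → (Fin N → ℝ))
    (hproxg : ∀ w : Fin N → ℝ,
      IsProxPt 1 (fun z => h ((Matrix.diagonal fun i => (Real.sqrt (d i))⁻¹) *ᵥ z))
        w (proxg w))
    (x : Fin N → ℝ)
    (L : ℝ → ℝ)
    (hL : ∀ α : ℝ, L α =
      u ⬝ᵥ (x - (Matrix.diagonal fun i => (Real.sqrt (d i))⁻¹) *ᵥ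
        proxg ((Matrix.diagonal fun i => Real.sqrt (d i)) *ᵥ
          (x - (ε * α) • ((Matrix.diagonal fun i => (d i)⁻¹) *ᵥ u)))) + α)
    (αs : ℝ)
    (hαs : αs = (u ⬝ᵥ ((Matrix.diagonal fun i => (Real.sqrt (d i))⁻¹) *ᵥ
        (c - ((1 : Matrix (Fin N) (Fin N) ℝ) - Pr) *ᵥ
          ((Matrix.diagonal fun i => Real.sqrt (d i)) *ᵥ x)))) /
      (1 + ε * (u ⬝ᵥ ((Matrix.diagonal fun i => (Real.sqrt (d i))⁻¹) *ᵥ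
        (Pr *ᵥ ((Matrix.diagonal fun i => (Real.sqrt (d i))⁻¹) *ᵥ u)))))) :
    (∀ z : Fin N → ℝ, proxg z = Pr *ᵥ z + c) ∧
    L αs = 0 ∧ (∀ α : ℝ, L α = 0 → α = αs) := by
  set Sm : Matrix (Fin N) (Fin N) ℝ := Matrix.diagonal fun i => (Real.sqrt (d i))⁻¹ with hSmdef
  set Sp : Matrix (Fin N) (Fin N) ℝ := Matrix.diagonal fun i => Real.sqrt (d i) with hSpdef
  have hs : ∀ i, Real.sqrt (d i) ≠ 0 := fun i => ne_of_gt (Real.sqrt_pos.mpr (hd i))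
  have hSmSp : Sm * Sp = 1 := by
    rw [hSmdef, hSpdef, diagonal_mul_diagonal]
    ext i j
    rcases eq_or_ne i j with rfl | hij
    · simp [inv_mul_cancel₀ (hs i)]
    · simp [Matrix.diagonal_apply_ne _ hij, Matrix.one_apply_ne hij]
  have hSpSm : Sp * Sm = 1 := by
    rw [hSpdef, hSmdef, diagonal_mul_diagonal]
    ext i j
    rcases eq_or_ne i j with rfl | hij
    · simp [mul_inv_cancel₀ (hs i)]
    · simp [Matrix.diagonal_apply_ne _ hij, Matrix.one_apply_ne hij]
  have hSmSpv : ∀ v : Fin N → ℝ, Sm *ᵥ (Sp *ᵥ v) = v := by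
    intro v; rw [mulVec_mulVec, hSmSp, one_mulVec]
  have hSpSmv : ∀ v : Fin N → ℝ, Sp *ᵥ (Sm *ᵥ v) = v := by
    intro v; rw [mulVec_mulVec, hSpSm, one_mulVec]
  have hYA : ∀ v : Fin N → ℝ, Y *ᵥ (Sp *ᵥ v) = A *ᵥ v := by
    intro v; rw [mulVec_mulVec, hY, Matrix.mul_assoc, hSmSp, Matrix.mul_one]
  have hAY : ∀ v : Fin N → ℝ, A *ᵥ (Sm *ᵥ v) = Y *ᵥ v := by
    intro v; rw [mulVec_mulVec, ← hY]
  obtain ⟨z0, hz0⟩ := hfeas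
  have hv0 : Y *ᵥ (Sp *ᵥ z0) = b := by rw [hYA, hz0]
  set v0 : Fin N → ℝ := Sp *ᵥ z0 with hv0def
  have hYc : Y *ᵥ c = b := by
    rw [hc, ← hv0, mulVec_mulVec, mulVec_mulVec, hYp.1]
  have hval : ∀ w : Fin N → ℝ, Y *ᵥ w = b → h (Sm *ᵥ w) = 0 := by
    intro w hw; exact (hind _).1 (by rw [hAY, hw])
  have hval' : ∀ w : Fin N → ℝ, h (Sm *ᵥ w) ≠ ⊤ → Y *ᵥ w = b := by
    intro w hw
    by_contra hne
    exact hw ((hind _).2 (by rw [hAY]; exact hne))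
  have hker : ∀ k : Fin N → ℝ, Y *ᵥ k = 0 → c ⬝ᵥ k = 0 := by
    intro k hk
    have hc' : c = (Yp * Y) *ᵥ v0 := by rw [hc, ← hv0, mulVec_mulVec]
    rw [hc', symmDot hYp.2.2.2, ← mulVec_mulVec, hk, mulVec_zero, dotProduct_zero]
  -- Part (i)
  have key1 : ∀ z : Fin N → ℝ, proxg z = Pr *ᵥ z + c := by
    intro z
    set p : Fin N → ℝ := Pr *ᵥ z + c with hp
    have hfp : Y *ᵥ p = b := by rw [hp, mulVec_add, hPr₃, hYc, zero_add]
    have horth : ∀ v : Fin N → ℝ, Y *ᵥ v = b → (z - p) ⬝ᵥ (v - p) = 0 := by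
      intro v hv
      have hk : Y *ᵥ (v - p) = 0 := by rw [mulVec_sub, hv, hfp, sub_self]
      have h1 : (Pr *ᵥ z) ⬝ᵥ (v - p) = z ⬝ᵥ (v - p) := by
        rw [symmDot hPr₁, hPr₄ _ hk]
      have hzp : z - p = z - Pr *ᵥ z - c := by rw [hp, sub_add_eq_sub_sub]
      rw [hzp, sub_dotProduct, sub_dotProduct, h1, hker _ hk, sub_zero, sub_self]
    have H := hproxg z p
    simp only [one_mulVec] at H
    have hgp : h (Sm *ᵥ p) = 0 := hval p hfp
    have hfq : Y *ᵥ proxg z = b := by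
      apply hval'
      intro htop
      rw [htop, hgp, zero_add, EReal.top_add_coe, top_le_iff] at H
      exact EReal.coe_ne_top _ H
    have hgq : h (Sm *ᵥ proxg z) = 0 := hval _ hfq
    rw [hgq, hgp, zero_add, zero_add, EReal.coe_le_coe_iff] at H
    have hperp : (z - p) ⬝ᵥ (proxg z - p) = 0 := horth _ hfq
    have hexp : (z - proxg z) ⬝ᵥ (z - proxg z)
        = (z - p) ⬝ᵥ (z - p) - 2 * ((z - p) ⬝ᵥ (proxg z - p))
          + (proxg z - p) ⬝ᵥ (proxg z - p) := by
      have hsplit : z - proxg z = (z - p) - (proxg z - p) := by abel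
      rw [hsplit, dotExpand]
    have hzero : (proxg z - p) ⬝ᵥ (proxg z - p) = 0 := by
      have hnn := selfDotNonneg (proxg z - p)
      nlinarith [H, hexp, hperp]
    have h0 : proxg z - p = 0 := dotProduct_self_eq_zero.mp hzero
    exact sub_eq_zero.mp h0
  -- Part (ii)
  set q : ℝ := u ⬝ᵥ (Sm *ᵥ (Pr *ᵥ (Sm *ᵥ u))) with hq
  set r : ℝ := u ⬝ᵥ (Sm *ᵥ (c - ((1 : Matrix (Fin N) (Fin N) ℝ) - Pr) *ᵥ (Sp *ᵥ x)))
    with hr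
  have hSmT : Smᵀ = Sm := by rw [hSmdef, diagonal_transpose]
  have hq_eq : q = (Pr *ᵥ (Sm *ᵥ u)) ⬝ᵥ (Pr *ᵥ (Sm *ᵥ u)) := by
    have h1 : q = (Sm *ᵥ u) ⬝ᵥ (Pr *ᵥ (Sm *ᵥ u)) := by
      rw [hq, symmDot hSmT]
    have h2 := symmDot hPr₁ (Pr *ᵥ (Sm *ᵥ u)) (Sm *ᵥ u)
    rw [mulVec_mulVec, hPr₂] at h2
    rw [h1, dotProduct_comm, h2]
  have hqnn : 0 ≤ q := hq_eq ▸ selfDotNonneg _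
  have hSpD : Sp * (Matrix.diagonal fun i => (d i)⁻¹) = Sm := by
    rw [hSpdef, hSmdef, diagonal_mul_diagonal]
    ext i j
    rcases eq_or_ne i j with rfl | hij
    · simp only [Matrix.diagonal_apply_eq]
      field_simp [hs i, (hd i).ne']
      linarith [Real.mul_self_sqrt (hd i).le]
    · simp [Matrix.diagonal_apply_ne _ hij]
  have hDSm : (Matrix.diagonal d) * Sm = Sp := by
    rw [hSmdef, hSpdef, diagonal_mul_diagonal]
    ext i j
    rcases eq_or_ne i j with rfl | hij
    · simp only [Matrix.diagonal_apply_eq]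
      field_simp [hs i, (hd i).ne']
      rw [Real.sq_sqrt (hd i).le]
    · simp [Matrix.diagonal_apply_ne _ hij]
  have hr_eq : r = u ⬝ᵥ (Sm *ᵥ c) - u ⬝ᵥ x + u ⬝ᵥ (Sm *ᵥ (Pr *ᵥ (Sp *ᵥ x))) := by
    rw [hr, sub_mulVec, one_mulVec, mulVec_sub, mulVec_sub, hSmSpv, dotProduct_sub,
      dotProduct_sub]
    ring
  have hLlin : ∀ α : ℝ, L α = α * (1 + ε * q) - r := by
    intro α
    rw [hL α, key1, mulVec_sub Sp, mulVec_smul, mulVec_mulVec, hSpD]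
    simp only [mulVec_add, mulVec_sub, mulVec_smul, dotProduct_sub, dotProduct_add,
      dotProduct_smul, smul_eq_mul]
    rw [hr_eq, hq]
    ring
  have hden : 0 < 1 + ε * q := by
    rcases hε with hε1 | hε1
    · rw [hε1]; linarith
    · rw [hε1]
      by_cases hp0 : Pr *ᵥ (Sm *ᵥ u) = 0
      · have hq0 : q = 0 := by rw [hq_eq, hp0, dotProduct_zero]
        rw [hq0]; norm_num
      · set p0 : Fin N → ℝ := Pr *ᵥ (Sm *ᵥ u) with hp0def
        have ht0 : Sm *ᵥ p0 ≠ 0 := by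
          intro h0
          apply hp0
          rw [← hSpSmv p0, h0, mulVec_zero]
        have hpd := hVpd.dotProduct_mulVec_pos ht0
        rw [star_trivial] at hpd
        set t : Fin N → ℝ := Sm *ᵥ p0 with ht
        have hVt : V *ᵥ t = (Matrix.diagonal d) *ᵥ t + ε • ((u ⬝ᵥ t) • u) := by
          rw [hV, add_mulVec, smul_mulVec, vvMulVec]
        have hDt : (Matrix.diagonal d) *ᵥ t = Sp *ᵥ p0 := by
          rw [ht, mulVec_mulVec, hDSm]
        have h1 : t ⬝ᵥ (Sp *ᵥ p0) = q := by
          rw [ht, symmDot hSmT, hSmSpv, ← hq_eq]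
        have h2 : u ⬝ᵥ t = q := hq.symm
        rw [hVt, dotProduct_add, hDt, h1, dotProduct_smul, smul_eq_mul,
          dotProduct_smul, smul_eq_mul, dotProduct_comm t u, h2, hε1] at hpd
        nlinarith [hpd, hqnn]
  refine ⟨key1, ?_, ?_⟩
  · rw [hLlin, hαs, div_mul_cancel₀ _ (ne_of_gt hden), sub_self]
  · intro α hα
    rw [hLlin] at hα
    rw [hαs, eq_div_iff (ne_of_gt hden)]
    linarith
end
end

section
/- Let s, y ∈ ℝ^N with y ≠ 0 and ⟨s, y⟩ ≠ 0. Set ρ = 1/⟨s, y⟩, τ = ⟨s, y⟩/‖y‖² (so that ρ τ ‖y‖² = 1), and let γ > 0. Then the following matrix identity holds: (Id − ρ s y^T)(γτ·Id)(Id − ρ y s^T) + ρ s s^T = γτ·Id + ρ(1+γ) u_γ u_γ^T − ρ γ²τ²/(1+γ) · y y^T, where u_γ = s − (γτ/(1+γ)) y. In particular, the zero-memory BFGS inverse-Hessian approximation V^T H₀ V + ρ s s^T with V = Id − ρ y s^T and H₀ = γτ·Id has the structure 'diagonal + rank-1 − rank-1' with positive semidefinite rank-1 terms. -/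
open Matrix

noncomputable section

lemma aux_vmv_mul {N : ℕ} (a b c d : Fin N → ℝ) :
    vecMulVec a b * vecMulVec c d = (b ⬝ᵥ c) • vecMulVec a d := by
  ext i j
  simp [Matrix.mul_apply, vecMulVec_apply, dotProduct, Finset.sum_mul, Finset.mul_sum]
  ring_nf
  apply Finset.sum_congr rfl
  intro k _
  ring

lemma aux_vmv_bilin {N : ℕ} (a b : Fin N → ℝ) (t : ℝ) :
    vecMulVec (a - t • b) (a - t • b)
      = vecMulVec a a - t • vecMulVec a b - t • vecMulVec b a
        + (t * t) • vecMulVec b b := by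
  ext i j
  simp [vecMulVec_apply]
  ring

/-- The zero-memory BFGS algebraic identity: for `s, y ∈ ℝ^N` with
`y ≠ 0`, `⟨s,y⟩ ≠ 0`, `ρ = 1/⟨s,y⟩`, `τ = ⟨s,y⟩/‖y‖²` and `γ > 0`:
`(Id - ρ s yᵀ)(γτ·Id)(Id - ρ y sᵀ) + ρ s sᵀ
  = γτ·Id + ρ(1+γ) u_γ u_γᵀ - ργ²τ²/(1+γ) y yᵀ`, with `u_γ = s - (γτ/(1+γ)) y`;
in particular the zero-memory BFGS inverse-Hessian approximation has the structure
"diagonal + rank-1 − rank-1" with positive semidefinite rank-1 terms. -/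
theorem stmt_19 {N : ℕ} (s y : Fin N → ℝ) (hy : y ≠ 0) (hsy : s ⬝ᵥ y ≠ 0)
    (ρ τ γ : ℝ) (hρ : ρ = (s ⬝ᵥ y)⁻¹) (hτ : τ = (s ⬝ᵥ y) / (y ⬝ᵥ y)) (hγ : 0 < γ) :
    ((1 : Matrix (Fin N) (Fin N) ℝ) - ρ • vecMulVec s y)
        * ((γ * τ) • (1 : Matrix (Fin N) (Fin N) ℝ))
        * ((1 : Matrix (Fin N) (Fin N) ℝ) - ρ • vecMulVec y s)
      + ρ • vecMulVec s s
    = (γ * τ) • (1 : Matrix (Fin N) (Fin N) ℝ)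
      + (ρ * (1 + γ)) • vecMulVec (s - (γ * τ / (1 + γ)) • y) (s - (γ * τ / (1 + γ)) • y)
      - (ρ * γ ^ 2 * τ ^ 2 / (1 + γ)) • vecMulVec y y := by
  have hyy : y ⬝ᵥ y ≠ 0 := fun h => hy ((dotProduct_self_eq_zero).mp h)
  have hγ1 : (1 : ℝ) + γ ≠ 0 := by positivity
  -- key scalar facts
  have hρτ : ρ * (y ⬝ᵥ y) * τ = 1 := by
    rw [hρ, hτ]; field_simp
  simp only [mul_smul_one, smul_sub, sub_mul, mul_sub, one_mul, mul_one,
    smul_mul_assoc, mul_smul_comm, aux_vmv_mul, aux_vmv_bilin, smul_smul]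
  ext i j
  simp only [Matrix.sub_apply, Matrix.add_apply, Matrix.smul_apply, vecMulVec_apply,
    smul_eq_mul, Matrix.one_apply]
  by_cases h : i = j
  · subst h
    simp only [if_true, mul_one]
    field_simp
    linear_combination (γ * ρ * (1+γ) * s i * s i) * hρτ
  · simp only [h, if_false, mul_zero, zero_sub, sub_zero, add_zero, zero_add]
    field_simp
    linear_combination (γ * ρ * (1+γ) * s i * s j) * hρτ
end
end
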